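/- arXiv:2401.04789 — 6 statements merged into one kernel-verified Lean document; each statement's English description precedes it below -/
import Mathlib

section
/- Let G be a finite group with normal subgroups A ≤ B, and let r, s be distinct primes dividing |B/A| but not dividing |A| and not dividing |G/B|. Then G contains an element of order r·s if and only if B/A contains an element of order r·s. -/
private lemma gk_aux {m r s N : ℕ} (hr : r.Prime) (hs : s.Prime)
    (hm : m ∣ r * s) (hmN : m ∣ N) (hrN : ¬ r ∣ N) (hsN : ¬ s ∣ N) : m = 1 := by
  have h1 : Nat.Coprime m r :=
    (Nat.Prime.coprime_iff_not_dvd hr |>.mpr (fun h => hrN (h.trans hmN))).symm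
  have h2 : Nat.Coprime m s :=
    (Nat.Prime.coprime_iff_not_dvd hs |>.mpr (fun h => hsN (h.trans hmN))).symm
  have hms : m ∣ s := h1.dvd_of_dvd_mul_left hm
  exact Nat.eq_one_of_dvd_one (h2 ▸ Nat.dvd_gcd dvd_rfl hms)

/-- Let `G` be a finite group with normal subgroups `A ≤ B`, and let `r, s` be distinct
primes dividing `|B/A|` but not dividing `|A|` and not dividing `|G/B|`. Then `G` contains
an element of order `r·s` if and only if `B/A` contains an element of order `r·s`. -/
theorem gk_adjacency_section {G : Type*} [Group G] [Finite G]
    (A B : Subgroup G) [A.Normal] [B.Normal] (hAB : A ≤ B)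
    (r s : ℕ) (hr : r.Prime) (hs : s.Prime) (hrs : r ≠ s)
    (hrB : r ∣ Nat.card (B ⧸ A.subgroupOf B)) (hsB : s ∣ Nat.card (B ⧸ A.subgroupOf B))
    (hrA : ¬ r ∣ Nat.card A) (hsA : ¬ s ∣ Nat.card A)
    (hrG : ¬ r ∣ Nat.card (G ⧸ B)) (hsG : ¬ s ∣ Nat.card (G ⧸ B)) :
    (∃ g : G, orderOf g = r * s) ↔ (∃ x : B ⧸ A.subgroupOf B, orderOf x = r * s) := by
  constructor
  · rintro ⟨g, hg⟩
    have h1 : orderOf ((QuotientGroup.mk' B) g) ∣ r * s :=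
      hg ▸ orderOf_map_dvd (QuotientGroup.mk' B) g
    have h2 : orderOf ((QuotientGroup.mk' B) g) ∣ Nat.card (G ⧸ B) := orderOf_dvd_natCard _
    have hgB : g ∈ B := (QuotientGroup.eq_one_iff g).mp
      (orderOf_eq_one_iff.mp (gk_aux hr hs h1 h2 hrG hsG))
    set b : B := ⟨g, hgB⟩ with hbdef
    have hb : orderOf b = r * s := by rw [hbdef, Subgroup.orderOf_mk]; exact hg
    set x : B ⧸ A.subgroupOf B := (QuotientGroup.mk' (A.subgroupOf B)) b with hxdef
    have hk : orderOf x ∣ r * s := hb ▸ orderOf_map_dvd (QuotientGroup.mk' (A.subgroupOf B)) b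
    refine ⟨x, ?_⟩
    have hbk : b ^ orderOf x ∈ A.subgroupOf B := by
      rw [← QuotientGroup.eq_one_iff]
      have : (QuotientGroup.mk' (A.subgroupOf B)) (b ^ orderOf x) = 1 := by
        rw [map_pow, ← hxdef]; exact pow_orderOf_eq_one x
      exact this
    have hA : g ^ orderOf x ∈ A := by
      have := hbk
      rw [Subgroup.mem_subgroupOf] at this
      simpa using this
    have hdvd : orderOf (g ^ orderOf x) ∣ Nat.card A := Subgroup.orderOf_dvd_natCard A hA
    have hcalc : orderOf (g ^ orderOf x) = r * s / orderOf x := by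
      rw [orderOf_pow, hg, Nat.gcd_eq_right hk]
    have hone : r * s / orderOf x = 1 :=
      gk_aux hr hs (Nat.div_dvd_of_dvd hk) (hcalc ▸ hdvd) hrA hsA
    have := Nat.div_mul_cancel hk
    rw [hone, one_mul] at this
    exact this
  · rintro ⟨x, hx⟩
    obtain ⟨b, rfl⟩ := QuotientGroup.mk'_surjective (A.subgroupOf B) x
    have hdvd : r * s ∣ orderOf b := hx ▸ orderOf_map_dvd (QuotientGroup.mk' (A.subgroupOf B)) b
    have hb0 : orderOf b ≠ 0 := (orderOf_pos b).ne'
    have hord : orderOf (b ^ (orderOf b / (r * s))) = r * s := orderOf_pow_orderOf_div hb0 hdvd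
    refine ⟨(b : G) ^ (orderOf b / (r * s)), ?_⟩
    rw [← SubgroupClass.coe_pow, Subgroup.orderOf_coe, hord]
end

section
/- Let G be a finite group, A a normal subgroup of G, and H a subgroup of A. Then H is pronormal in G if and only if H is pronormal in A and G = A · N_G(H). -/
/-- `H` is pronormal in the subgroup `K` of `G`: for every `g ∈ K`, the subgroups `H` and
`H^g` are conjugate in the subgroup `⟨H, H^g⟩` that they generate. -/
def IsPronormalIn {G : Type*} [Group G] (H K : Subgroup G) : Prop :=
  ∀ g ∈ K, ∃ x ∈ H ⊔ H.map (MulAut.conj g).toMonoidHom,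
    H.map (MulAut.conj x).toMonoidHom = H.map (MulAut.conj g).toMonoidHom

private lemma mem_cmap {G : Type*} [Group G] (H : Subgroup G) (g x : G) :
    x ∈ H.map (MulAut.conj g).toMonoidHom ↔ g⁻¹ * x * g ∈ H := by
  rw [Subgroup.mem_map_equiv]
  simp [mul_assoc]

private lemma cmap_mul {G : Type*} [Group G] (H : Subgroup G) (a b : G) :
    H.map (MulAut.conj (a * b)).toMonoidHom =
      (H.map (MulAut.conj b).toMonoidHom).map (MulAut.conj a).toMonoidHom := by
  ext x
  simp only [mem_cmap, mul_inv_rev, mul_assoc]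

private lemma cmap_of_mem_normalizer {G : Type*} [Group G] {H : Subgroup G} {n : G}
    (hn : n ∈ Subgroup.normalizer (H : Set G)) : H.map (MulAut.conj n).toMonoidHom = H := by
  rw [Subgroup.mem_normalizer_iff] at hn
  ext x
  rw [mem_cmap]
  constructor
  · intro hx
    have := (hn (n⁻¹ * x * n)).mp hx
    simpa [mul_assoc] using this
  · intro hx
    refine (hn (n⁻¹ * x * n)).mpr ?_
    simpa [mul_assoc] using hx

/-- Let `G` be a finite group, `A` a normal subgroup of `G`, and `H ≤ A`. Then `H` is
pronormal in `G` if and only if `H` is pronormal in `A` and `G = A · N_G(H)`. -/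
theorem pronormal_iff_of_le_normal {G : Type*} [Group G] [Finite G]
    (A H : Subgroup G) [A.Normal] (hHA : H ≤ A) :
    IsPronormalIn H ⊤ ↔
      (IsPronormalIn H A ∧ ∀ g : G, ∃ a ∈ A, ∃ n ∈ Subgroup.normalizer (H : Set G), g = a * n) := by
  constructor
  · intro hpro
    refine ⟨fun g _ => hpro g trivial, fun g => ?_⟩
    obtain ⟨x, hx, heq⟩ := hpro g trivial
    have hxA : x ∈ A := by
      refine (sup_le hHA ?_) hx
      intro y hy
      rw [mem_cmap] at hy
      have := ‹A.Normal›.conj_mem _ (hHA hy) g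
      simpa [mul_assoc] using this
    refine ⟨x, hxA, x⁻¹ * g, ?_, by group⟩
    rw [Subgroup.mem_normalizer_iff]
    intro h
    constructor
    · intro hh
      have h1 : g * h * g⁻¹ ∈ H.map (MulAut.conj x).toMonoidHom := by
        rw [heq, mem_cmap]; simpa [mul_assoc] using hh
      rw [mem_cmap] at h1
      simpa [mul_assoc] using h1
    · intro hh
      have h1 : g * h * g⁻¹ ∈ H.map (MulAut.conj x).toMonoidHom := by
        rw [mem_cmap]; simpa [mul_assoc] using hh
      rw [heq, mem_cmap] at h1
      simpa [mul_assoc] using h1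
  · rintro ⟨hpa, hfac⟩ g _
    obtain ⟨a, ha, n, hn, rfl⟩ := hfac g
    have hkey : H.map (MulAut.conj (a * n)).toMonoidHom = H.map (MulAut.conj a).toMonoidHom := by
      rw [cmap_mul, cmap_of_mem_normalizer hn]
    obtain ⟨x, hx, heq⟩ := hpa a ha
    exact ⟨x, by rwa [hkey], by rw [heq, hkey]⟩
end

section
/- For the alternating group Alt_n (n ≥ 5), a prime p is non-adjacent to 2 in the Gruenberg–Kegel graph Γ(Alt_n) if and only if n − 4 < p ≤ n. In particular, Alt_n contains an element of order 2p for a prime p ≤ n if and only if p + 4 ≤ n. -/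
open Equiv Equiv.Perm

/-- Divisors `≥ 2` of `2 * p` for `p` prime. -/
lemma divisor_two_mul_prime {p m : ℕ} (hp : p.Prime) (hm2 : 2 ≤ m) (hdvd : m ∣ 2 * p) :
    m = 2 ∨ m = p ∨ m = 2 * p := by
  by_cases hpm : p ∣ m
  · obtain ⟨k, rfl⟩ := hpm
    have hk : k ∣ 2 := by
      have := hdvd
      rw [mul_comm 2 p] at this
      exact (mul_dvd_mul_iff_left hp.pos.ne').mp this
    have := Nat.le_of_dvd (by norm_num) hk
    rcases (Nat.dvd_prime Nat.prime_two).mp hk with rfl | rfl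
    · right; left; omega
    · right; right; ring
  · have hcop : Nat.Coprime m p := ((Nat.Prime.coprime_iff_not_dvd hp).2 hpm).symm
    have hm : m ∣ 2 := hcop.dvd_of_dvd_mul_right hdvd
    left
    have := Nat.le_of_dvd (by norm_num) hm
    omega

/-- Nonzero multisets with all members at least `2` have sum at least `2`. -/
lemma two_le_sum_of_ne_zero {N : Multiset ℕ} (hN : ∀ m ∈ N, 2 ≤ m) (h0 : N ≠ 0) :
    2 ≤ N.sum := by
  obtain ⟨a, ha⟩ := Multiset.exists_mem_of_ne_zero h0
  exact le_trans (hN a ha) (Multiset.single_le_sum (fun x _ => Nat.zero_le x) a ha)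

/-- Key multiset lemma: an even-signed cycle type with lcm `2 p` has sum at least `p + 4`. -/
lemma sum_ge_of_lcm {p : ℕ} (hp : p.Prime) (M : Multiset ℕ)
    (h2 : ∀ m ∈ M, 2 ≤ m) (hdvd : ∀ m ∈ M, m ∣ 2 * p)
    (hlcm : M.lcm = 2 * p) (heven : Even (M.sum + Multiset.card M)) :
    p + 4 ≤ M.sum := by
  have hp2 := hp.two_le
  have hclass : ∀ m ∈ M, m = 2 ∨ m = p ∨ m = 2 * p := fun m hm =>
    divisor_two_mul_prime hp (h2 m hm) (hdvd m hm)
  have hlcm_dvd_prod : M.lcm ∣ M.prod := Multiset.lcm_dvd.mpr fun a ha => Multiset.dvd_prod ha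
  have hlcmprod : 2 * p ∣ M.prod := hlcm ▸ hlcm_dvd_prod
  have hpprod : p ∣ M.prod := dvd_trans (dvd_mul_left p 2) hlcmprod
  have h2prod : (2 : ℕ) ∣ M.prod := dvd_trans (dvd_mul_right 2 p) hlcmprod
  by_cases hp2' : p = 2
  · -- p = 2 : lcm is 4, so some member is 4, and parity forces another member.
    subst hp2'
    have h4 : ∃ a ∈ M, a = 4 := by
      by_contra hcon
      push_neg at hcon
      have hall : ∀ a ∈ M, a ∣ 2 := by
        intro a ha
        rcases hclass a ha with rfl | rfl | h4'
        · exact dvd_refl 2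
        · exact dvd_refl 2
        · exact absurd (by omega : a = 4) (hcon a ha)
      have : M.lcm ∣ 2 := Multiset.lcm_dvd.mpr hall
      rw [hlcm] at this
      exact absurd (Nat.le_of_dvd (by norm_num) this) (by norm_num)
    obtain ⟨a, haM, rfl⟩ := h4
    rw [← Multiset.cons_erase haM, Multiset.sum_cons, Multiset.card_cons] at heven
    rw [← Multiset.cons_erase haM, Multiset.sum_cons]
    obtain ⟨k, hk⟩ := heven
    by_cases h0 : M.erase 4 = 0
    · rw [h0] at hk; simp at hk; omega
    · have := two_le_sum_of_ne_zero (fun m hm => h2 m (Multiset.mem_of_mem_erase hm)) h0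
      omega
  · -- p odd
    have hpodd : p % 2 = 1 := Nat.odd_iff.mp (hp.odd_of_ne_two hp2')
    have hp3 : 3 ≤ p := by omega
    obtain ⟨a, haM, hpa⟩ := hp.prime.exists_mem_multiset_dvd hpprod
    have ha : a = p ∨ a = 2 * p := by
      rcases hclass a haM with rfl | h | h
      · exfalso; have := Nat.le_of_dvd (by norm_num) hpa; omega
      · left; exact h
      · right; exact h
    rcases ha with hap | hap
    · -- a p-cycle is present; find an even member
      obtain ⟨b, hbM, h2b⟩ := Nat.prime_two.prime.exists_mem_multiset_dvd h2prod
      have hbne : b ≠ a := by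
        rintro rfl; omega
      have hb' : b ∈ M.erase a := (Multiset.mem_erase_of_ne hbne).mpr hbM
      have hbclass : b = 2 ∨ b = 2 * p := by
        rcases hclass b hbM with h | h | h
        · left; exact h
        · exact absurd (h.trans hap.symm) hbne
        · right; exact h
      rw [← Multiset.cons_erase haM, Multiset.sum_cons, Multiset.card_cons] at heven
      rw [← Multiset.cons_erase haM, Multiset.sum_cons]
      rcases hbclass with hb2 | hb2
      · -- b = 2 : parity forces yet another member
        rw [← Multiset.cons_erase hb', Multiset.sum_cons, Multiset.card_cons] at heven
        rw [← Multiset.cons_erase hb', Multiset.sum_cons]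
        obtain ⟨k, hk⟩ := heven
        by_cases h0 : (M.erase a).erase b = 0
        · rw [h0] at hk; simp at hk; omega
        · have := two_le_sum_of_ne_zero
            (fun m hm => h2 m (Multiset.mem_of_mem_erase (Multiset.mem_of_mem_erase hm))) h0
          omega
      · -- b = 2p : sum is at least p + 2p
        have := Multiset.single_le_sum (fun x (_ : x ∈ M.erase a) => Nat.zero_le x) _ hb'
        omega
    · -- a 2p-cycle is present, parity forces another member
      rw [← Multiset.cons_erase haM, Multiset.sum_cons, Multiset.card_cons] at heven
      rw [← Multiset.cons_erase haM, Multiset.sum_cons]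
      obtain ⟨k, hk⟩ := heven
      by_cases h0 : M.erase a = 0
      · rw [h0] at hk; simp at hk; omega
      · have := two_le_sum_of_ne_zero (fun m hm => h2 m (Multiset.mem_of_mem_erase hm)) h0
        omega

/-- `Alt_n` has an element of order `2p` iff `p + 4 ≤ n`. -/
lemma alt_exists_order_two_mul_iff (n p : ℕ) (hp : p.Prime) :
    (∃ g : alternatingGroup (Fin n), orderOf g = 2 * p) ↔ p + 4 ≤ n := by
  constructor
  · rintro ⟨g, hg⟩
    have hge : orderOf (g : Perm (Fin n)) = 2 * p := by rw [Subgroup.orderOf_coe, hg]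
    set σ := (g : Perm (Fin n)) with hσ
    have hsign : Equiv.Perm.sign σ = 1 := mem_alternatingGroup.mp g.2
    have hlcm : σ.cycleType.lcm = 2 * p := by rw [lcm_cycleType, hge]
    have heven : Even (σ.cycleType.sum + Multiset.card σ.cycleType) := by
      have hs := sign_of_cycleType σ
      rw [hsign] at hs
      exact (neg_one_pow_eq_one_iff_even (by decide)).mp hs.symm
    have hsum := sum_ge_of_lcm hp σ.cycleType (fun m hm => two_le_of_mem_cycleType hm)
        (fun m hm => by rw [← hge]; exact dvd_of_mem_cycleType hm) hlcm heven
    calc p + 4 ≤ σ.cycleType.sum := hsum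
      _ = σ.support.card := sum_cycleType σ
      _ ≤ Fintype.card (Fin n) := σ.support.card_le_univ
      _ = n := Fintype.card_fin n
  · intro h
    have hp2 := hp.two_le
    by_cases hp2' : p = 2
    · -- cycle type {4, 2}
      subst hp2'
      obtain ⟨σ, hσ⟩ := (exists_with_cycleType_iff (Fin n) (m := ({4, 2} : Multiset ℕ))).mpr
        (by
          constructor
          · have : ({4, 2} : Multiset ℕ).sum = 6 := by decide
            rw [this, Fintype.card_fin]; omega
          · intro a ha
            simp only [Multiset.insert_eq_cons, Multiset.mem_cons,
              Multiset.mem_singleton] at ha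
            rcases ha with rfl | rfl <;> norm_num)
      have horder : orderOf σ = 4 := by
        rw [← lcm_cycleType, hσ]
        decide
      have hsign : Equiv.Perm.sign σ = 1 := by
        rw [sign_of_cycleType, hσ]
        decide
      exact ⟨⟨σ, mem_alternatingGroup.mpr hsign⟩, by
        rw [Subgroup.orderOf_mk, horder]⟩
    · -- cycle type {p, 2, 2}
      have hpodd : p % 2 = 1 := Nat.odd_iff.mp (hp.odd_of_ne_two hp2')
      have hsum : ({p, 2, 2} : Multiset ℕ).sum = p + 4 := by
        simp only [Multiset.insert_eq_cons, Multiset.sum_cons, Multiset.sum_singleton]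
      obtain ⟨σ, hσ⟩ := (exists_with_cycleType_iff (Fin n) (m := ({p, 2, 2} : Multiset ℕ))).mpr
        (by
          constructor
          · rw [hsum, Fintype.card_fin]; omega
          · intro a ha
            simp only [Multiset.insert_eq_cons, Multiset.mem_cons, Multiset.mem_singleton] at ha
            rcases ha with rfl | rfl | rfl <;> omega)
      have hp3 : 3 ≤ p := by
        rcases hp.two_le.lt_or_eq with h | h
        · omega
        · omega
      have hcop : Nat.Coprime p 2 := (hp.coprime_iff_not_dvd).2
        (fun h => by have := Nat.le_of_dvd (by norm_num) h; omega)
      have hlcm : ({p, 2, 2} : Multiset ℕ).lcm = 2 * p := by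
        simp only [Multiset.insert_eq_cons, Multiset.lcm_cons, Multiset.lcm_singleton,
          normalize_eq, lcm_eq_nat_lcm]
        rw [Nat.lcm_self, Nat.Coprime.lcm_eq_mul hcop, mul_comm]
      have horder : orderOf σ = 2 * p := by rw [← lcm_cycleType, hσ, hlcm]
      have hsign : Equiv.Perm.sign σ = 1 := by
        rw [sign_of_cycleType, hσ]
        have hcard : Multiset.card ({p, 2, 2} : Multiset ℕ) = 3 := rfl
        rw [hcard, hsum]
        refine Even.neg_one_pow ?_
        rw [Nat.even_iff]
        omega
      exact ⟨⟨σ, mem_alternatingGroup.mpr hsign⟩, by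
        rw [Subgroup.orderOf_mk, horder]⟩

/-- For the alternating group `Alt_n` (`n ≥ 5`), a prime `p` (vertex of the
Gruenberg–Kegel graph, i.e. `p` divides `|Alt_n|`) is non-adjacent to `2` in
`Γ(Alt_n)` if and only if `n − 4 < p ≤ n`.  In particular, `Alt_n` contains an
element of order `2p` for a prime `p ≤ n` if and only if `p + 4 ≤ n`. -/
theorem alternating_nonadjacent_two (n : ℕ) (hn : 5 ≤ n) :
    (∀ p : ℕ, p.Prime → p ∣ Nat.card (alternatingGroup (Fin n)) →
      ((¬ ∃ g : alternatingGroup (Fin n), orderOf g = 2 * p) ↔ (n - 4 < p ∧ p ≤ n))) ∧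
    (∀ p : ℕ, p.Prime → p ≤ n →
      ((∃ g : alternatingGroup (Fin n), orderOf g = 2 * p) ↔ p + 4 ≤ n)) := by
  constructor
  · intro p hp hdvdcard
    have hnt : Nontrivial (Fin n) := Fin.nontrivial_iff_two_le.mpr (by omega)
    have hcard : 2 * Nat.card (alternatingGroup (Fin n)) = Nat.factorial n := by
      rw [Nat.card_eq_fintype_card, two_mul_card_alternatingGroup, Fintype.card_perm,
        Fintype.card_fin]
    have hple : p ≤ n := by
      have : p ∣ Nat.factorial n := hcard ▸ hdvdcard.mul_left 2
      exact (Nat.Prime.dvd_factorial hp).mp this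
    rw [alt_exists_order_two_mul_iff n p hp]
    omega
  · intro p hp _
    exact alt_exists_order_two_mul_iff n p hp
end

section
/- Let N be an elementary abelian normal subgroup of a finite group G, set H = G/N, and let φ : H → Aut(N) be the homomorphism induced by conjugation (well-defined since N is abelian). Then the Gruenberg–Kegel graph of G equals the Gruenberg–Kegel graph of the semidirect product N ⋊_φ H. -/
open SemidirectProduct

private instance sdp_finite {N G : Type*} [Group N] [Group G] [Finite N] [Finite G]
    (φ : G →* MulAut N) : Finite (N ⋊[φ] G) :=
  Finite.of_injective (fun x : N ⋊[φ] G => (x.left, x.right))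
    (fun a b h => by
      have h1 : a.left = b.left := congrArg Prod.fst h
      have h2 : a.right = b.right := congrArg Prod.snd h
      cases a; cases b; cases h1; cases h2; rfl)

private lemma exists_orderOf_eq_of_dvd {M : Type*} [Group M] [Finite M] {k : ℕ} (g : M)
    (h : k ∣ orderOf g) : ∃ x : M, orderOf x = k :=
  ⟨g ^ (orderOf g / k), orderOf_pow_orderOf_div (orderOf_pos g).ne' h⟩

private lemma divisor_cases {r s d : ℕ} (hr : r.Prime) (hs : s.Prime) (hrs : r ≠ s)
    (hd : d ∣ r * s) : d = 1 ∨ d = r ∨ d = s ∨ d = r * s := by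
  by_cases h1 : r ∣ d <;> by_cases h2 : s ∣ d
  · exact Or.inr <| Or.inr <| Or.inr <|
      Nat.dvd_antisymm hd (((Nat.coprime_primes hr hs).mpr hrs).mul_dvd_of_dvd_of_dvd h1 h2)
  · obtain ⟨e, rfl⟩ := h1
    have he : e ∣ s := (mul_dvd_mul_iff_left (a := r) (by exact_mod_cast hr.pos.ne')).mp hd
    rcases (hs.eq_one_or_self_of_dvd e he) with h | h
    · exact Or.inr <| Or.inl (by simp [h])
    · subst h
      exact absurd (dvd_mul_left e r) h2
  · obtain ⟨e, rfl⟩ := h2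
    rw [mul_comm r s] at hd
    have he : e ∣ r := (mul_dvd_mul_iff_left (a := s) (by exact_mod_cast hs.pos.ne')).mp hd
    rcases (hr.eq_one_or_self_of_dvd e he) with h | h
    · exact Or.inr <| Or.inr <| Or.inl (by simp [h])
    · subst h
      exact absurd (dvd_mul_left e s) h1
  · have c1 : d.Coprime r := (hr.coprime_iff_not_dvd.mpr h1).symm
    have c2 : d.Coprime s := (hs.coprime_iff_not_dvd.mpr h2).symm
    exact Or.inl ((c1.mul_right c2).eq_one_of_dvd hd)

section

variable {G : Type*} [Group G] [Finite G] (N : Subgroup G) [N.Normal]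
  (φ : G ⧸ N →* MulAut N)

private lemma conj_inl (x : N ⋊[φ] (G ⧸ N)) (n : N) :
    x * inl n * x⁻¹ = inl (x.left * φ x.right n * x.left⁻¹) := by
  ext <;> simp [mul_left, mul_right, inv_left, inv_right, left_inl, right_inl, mul_assoc]

private lemma lem_into
    (hφ : ∀ (g : G) (n : N), ((φ (QuotientGroup.mk g) n : G)) = g * n * g⁻¹)
    {r q : ℕ} (hr : r.Prime) (hq : q.Prime) (hne : r ≠ q) (g : G)
    (hg : orderOf g = r * q) (hd : orderOf (QuotientGroup.mk g : G ⧸ N) = r) :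
    ∃ x : N ⋊[φ] (G ⧸ N), orderOf x = r * q := by
  set h : G ⧸ N := QuotientGroup.mk g with hh
  have hmk : (QuotientGroup.mk (g ^ r) : G ⧸ N) = h ^ r := map_pow (QuotientGroup.mk' N) g r
  have hmem : g ^ r ∈ N := by
    rw [← QuotientGroup.eq_one_iff]
    rw [hmk, ← hd]
    exact pow_orderOf_eq_one h
  set n : N := ⟨g ^ r, hmem⟩ with hn
  have hnq : orderOf n = q := by
    rw [Subgroup.orderOf_mk, orderOf_pow, hg]
    have : Nat.gcd (r * q) r = r := by
      simpa using Nat.gcd_mul_left r q 1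
    rw [this, Nat.mul_div_cancel_left q hr.pos]
  have hfix : φ h n = n := by
    apply Subtype.ext
    rw [hh, hφ g n]
    show g * g ^ r * g⁻¹ = g ^ r
    group
  have hc : Commute (inr h : N ⋊[φ] (G ⧸ N)) (inl n) := by
    have h1 := inl_aut (φ := φ) h n
    rw [hfix, map_inv] at h1
    show inr h * inl n = inl n * inr h
    have h2 := congrArg (fun z => z * inr h) h1
    simp only [inv_mul_cancel_right] at h2
    exact h2.symm
  have hor : orderOf (inr h : N ⋊[φ] (G ⧸ N)) = r :=
    (orderOf_injective inr inr_injective h).trans hd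
  have hon : orderOf (inl n : N ⋊[φ] (G ⧸ N)) = q :=
    (orderOf_injective inl inl_injective n).trans hnq
  refine ⟨inr h * inl n, ?_⟩
  rw [hc.orderOf_mul_eq_mul_orderOf_of_coprime, hor, hon]
  rw [hor, hon]
  exact (Nat.coprime_primes hr hq).mpr hne

private lemma lem_from
    (hφ : ∀ (g : G) (n : N), ((φ (QuotientGroup.mk g) n : G)) = g * n * g⁻¹)
    (hab : ∀ a ∈ N, ∀ b ∈ N, a * b = b * a)
    {p : ℕ} (hp : p.Prime) (helem : ∀ n ∈ N, n ^ p = 1)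
    {r q : ℕ} (hr : r.Prime) (hq : q.Prime) (hne : r ≠ q)
    (x : N ⋊[φ] (G ⧸ N)) (hx : orderOf x = r * q)
    (hd : orderOf (rightHom x) = r) :
    ∃ g : G, orderOf g = r * q := by
  set h : G ⧸ N := rightHom x with hh
  have h1 : rightHom (x ^ r) = 1 := by
    rw [map_pow, ← hh, ← hd]
    exact pow_orderOf_eq_one h
  obtain ⟨m, hm⟩ : x ^ r ∈ (inl : N →* N ⋊[φ] (G ⧸ N)).range := by
    rw [range_inl_eq_ker_rightHom]
    exact h1
  have hmq : orderOf m = q := by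
    rw [← orderOf_injective (inl : N →* N ⋊[φ] (G ⧸ N)) inl_injective m, hm, orderOf_pow, hx]
    have : Nat.gcd (r * q) r = r := by
      simpa using Nat.gcd_mul_left r q 1
    rw [this, Nat.mul_div_cancel_left q hr.pos]
  have hmp : m ^ p = 1 := by
    apply Subtype.ext
    push_cast
    exact helem _ m.2
  have hqp : q = p :=
    (Nat.prime_dvd_prime_iff_eq hq hp).mp (hmq ▸ orderOf_dvd_of_pow_eq_one hmp)
  subst hqp
  obtain ⟨g0, hg0⟩ := QuotientGroup.mk_surjective h
  have hrg : r ∣ orderOf g0 := by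
    have h2 := orderOf_map_dvd (QuotientGroup.mk' N) g0
    rw [QuotientGroup.mk'_apply, hg0, hd] at h2
    exact h2
  have hmem : g0 ^ r ∈ N := by
    rw [← QuotientGroup.eq_one_iff]
    have : (QuotientGroup.mk (g0 ^ r) : G ⧸ N) = h ^ r := by
      rw [← hg0]; exact map_pow (QuotientGroup.mk' N) g0 r
    rw [this, ← hd]
    exact pow_orderOf_eq_one h
  have hdvd : orderOf g0 ∣ r * q := orderOf_dvd_of_pow_eq_one (by rw [pow_mul]; exact helem _ hmem)
  by_cases hpd : q ∣ orderOf g0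
  · have : r * q ∣ orderOf g0 :=
      ((Nat.coprime_primes hr hq).mpr hne).mul_dvd_of_dvd_of_dvd hrg hpd
    exact exists_orderOf_eq_of_dvd g0 this
  · have hco : (orderOf g0).Coprime q := ((hq.coprime_iff_not_dvd.mpr hpd)).symm
    have hog : orderOf g0 ∣ r := hco.dvd_of_dvd_mul_right hdvd
    have hgr : orderOf g0 = r := Nat.dvd_antisymm hog hrg
    -- φ h m = m
    have e2 : x.left * φ x.right m * x.left⁻¹ = m := by
      apply inl_injective (φ := φ)
      rw [← conj_inl, hm]
      group
    have comm : x.left * (φ x.right m) = (φ x.right m) * x.left :=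
      Subtype.ext (hab _ x.left.2 _ (φ x.right m).2)
    have key : φ h m = m := by
      rw [hh]
      rw [comm] at e2
      simpa [mul_assoc] using e2
    have hconj : g0 * (m : G) * g0⁻¹ = (m : G) := by
      have := hφ g0 m
      rw [hg0, key] at this
      exact this.symm
    have hcom : Commute g0 (m : G) := by
      show g0 * (m : G) = (m : G) * g0
      conv_rhs => rw [← hconj]
      group
    have hmo : orderOf (m : G) = q := (Subgroup.orderOf_coe m).trans hmq
    refine ⟨g0 * (m : G), ?_⟩
    rw [hcom.orderOf_mul_eq_mul_orderOf_of_coprime, hgr, hmo]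
    rw [hgr, hmo]
    exact (Nat.coprime_primes hr hq).mpr hne

end

/-- Let `N` be an elementary abelian normal subgroup of a finite group `G`, let
`H = G/N`, and let `φ : H → Aut(N)` be the homomorphism induced by conjugation.  Then the
Gruenberg–Kegel graph of `G` equals the Gruenberg–Kegel graph of `N ⋊_φ H`: the two
groups have the same order and, for all distinct primes `r, s`, one contains an element
of order `r·s` iff the other does. -/
theorem gk_graph_semidirect {G : Type*} [Group G] [Finite G] (N : Subgroup G) [N.Normal]
    (p : ℕ) (hp : p.Prime) (helem : ∀ n ∈ N, n ^ p = 1)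
    (hab : ∀ a ∈ N, ∀ b ∈ N, a * b = b * a)
    (φ : G ⧸ N →* MulAut N)
    (hφ : ∀ (g : G) (n : N), ((φ (QuotientGroup.mk g) n : G)) = g * n * g⁻¹) :
    Nat.card G = Nat.card (N ⋊[φ] (G ⧸ N)) ∧
    ∀ r s : ℕ, r.Prime → s.Prime → r ≠ s →
      ((∃ g : G, orderOf g = r * s) ↔ ∃ x : N ⋊[φ] (G ⧸ N), orderOf x = r * s) := by
  constructor
  · have e : N ⋊[φ] (G ⧸ N) ≃ N × (G ⧸ N) :=
      ⟨fun x => (x.left, x.right), fun y => ⟨y.1, y.2⟩, fun x => by cases x; rfl, fun y => rfl⟩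
    rw [Nat.card_congr e, Nat.card_prod,
      Subgroup.card_eq_card_quotient_mul_card_subgroup N, mul_comm]
  · intro r s hr hs hrs
    constructor
    · rintro ⟨g, hg⟩
      have hdvd : orderOf (QuotientGroup.mk g : G ⧸ N) ∣ r * s := by
        rw [← hg]
        exact orderOf_map_dvd (QuotientGroup.mk' N) g
      rcases divisor_cases hr hs hrs hdvd with h | h | h | h
      · exfalso
        have hgN : g ∈ N := (QuotientGroup.eq_one_iff g).mp (orderOf_eq_one_iff.mp h)
        have hps : r * s ∣ p := hg ▸ orderOf_dvd_of_pow_eq_one (helem g hgN)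
        have hr' : r = p := (Nat.prime_dvd_prime_iff_eq hr hp).mp
          (dvd_trans (dvd_mul_right r s) hps)
        have hs' : s = p := (Nat.prime_dvd_prime_iff_eq hs hp).mp
          (dvd_trans (dvd_mul_left s r) hps)
        exact hrs (hr'.trans hs'.symm)
      · exact lem_into N φ hφ hr hs hrs g hg h
      · obtain ⟨x, hx⟩ := lem_into N φ hφ hs hr (Ne.symm hrs) g (by rw [mul_comm]; exact hg) h
        exact ⟨x, by rw [hx, mul_comm]⟩
      · exact ⟨inr (QuotientGroup.mk g), (orderOf_injective inr inr_injective _).trans h⟩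
    · rintro ⟨x, hx⟩
      have hdvd : orderOf (rightHom x) ∣ r * s := by
        rw [← hx]
        exact orderOf_map_dvd rightHom x
      rcases divisor_cases hr hs hrs hdvd with h | h | h | h
      · exfalso
        obtain ⟨m, hm⟩ : x ∈ (inl : N →* N ⋊[φ] (G ⧸ N)).range := by
          rw [range_inl_eq_ker_rightHom]
          exact orderOf_eq_one_iff.mp h
        have hmo : orderOf m = r * s := by
          rw [← hx, ← hm, orderOf_injective inl inl_injective]
        have hmp : m ^ p = 1 := by
          apply Subtype.ext
          push_cast
          exact helem _ m.2
        have hps : r * s ∣ p := hmo ▸ orderOf_dvd_of_pow_eq_one hmp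
        have hr' : r = p := (Nat.prime_dvd_prime_iff_eq hr hp).mp
          (dvd_trans (dvd_mul_right r s) hps)
        have hs' : s = p := (Nat.prime_dvd_prime_iff_eq hs hp).mp
          (dvd_trans (dvd_mul_left s r) hps)
        exact hrs (hr'.trans hs'.symm)
      · exact lem_from N φ hφ hab hp helem hr hs hrs x hx h
      · obtain ⟨g, hg⟩ := lem_from N φ hφ hab hp helem hs hr (Ne.symm hrs) x
          (by rw [mul_comm]; exact hx) h
        exact ⟨g, by rw [hg, mul_comm]⟩
      · obtain ⟨g0, hg0⟩ := QuotientGroup.mk_surjective (rightHom x)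
        have : r * s ∣ orderOf g0 := by
          have h2 := orderOf_map_dvd (QuotientGroup.mk' N) g0
          rw [QuotientGroup.mk'_apply, hg0, h] at h2
          exact h2
        exact exists_orderOf_eq_of_dvd g0 this
end

section
/- Let G be a finite solvable group whose Gruenberg–Kegel graph contains three pairwise non-adjacent vertices. Then a contradiction arises; i.e., if G is a finite solvable group, then among any three distinct primes p, q, r dividing |G|, at least one of pq, pr, qr is the order of an element of G. -/
open Finset
open scoped IsMulCommutative

namespace LucidoAux

variable {G : Type*} [Group G]

/-- Conjugation by `g` as a monoid hom on a normal subgroup `T`. -/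
def cT (T : Subgroup G) (hN : T.Normal) (g : G) : ↥T →* ↥T where
  toFun v := ⟨g * ↑v * g⁻¹, hN.conj_mem ↑v v.2 g⟩
  map_one' := by ext; simp
  map_mul' v w := by ext; simp [mul_assoc]

lemma cT_apply (T : Subgroup G) (hN : T.Normal) (g : G) (v : ↥T) :
    (cT T hN g v : G) = g * ↑v * g⁻¹ := rfl

lemma cT_cT (T : Subgroup G) (hN : T.Normal) (g h : G) (v : ↥T) :
    cT T hN g (cT T hN h v) = cT T hN (g * h) v := by
  ext; simp [cT_apply, mul_assoc]

lemma cT_one (T : Subgroup G) (hN : T.Normal) (v : ↥T) : cT T hN 1 v = v := by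
  ext; simp [cT_apply]

section Norm

variable (T : Subgroup G) [IsMulCommutative T] [Finite G] (hN : T.Normal)

set_option maxHeartbeats 1000000 in
/-- The "norm" of a fixed-point-free automorphism of order `ℓ` is trivial. -/
lemma norm_eq_one {e : G} {ℓ : ℕ} (hord : orderOf e = ℓ)
    (hfree : ∀ n ∈ T, e * n * e⁻¹ = n → n = 1) (v : ↥T) :
    ∏ i ∈ range ℓ, cT T hN (e ^ i) v = 1 := by
  have hφinj : Function.Injective (fun w : ↥T => cT T hN e w / w) := by
    intro x y h
    simp only [div_eq_div_iff_mul_eq_mul] at h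
    have h2 : cT T hN e (x / y) = x / y := by
      rw [map_div, div_eq_div_iff_mul_eq_mul, h, mul_comm]
    have h3 : ((x / y : ↥T) : G) = 1 := hfree _ (x / y).2 (congrArg Subtype.val h2)
    have : (x / y : ↥T) = 1 := by ext; exact h3
    rwa [div_eq_one] at this
  obtain ⟨w, hw⟩ := Finite.injective_iff_surjective.mp hφinj v
  rw [← hw]
  have key : ∀ i : ℕ, cT T hN (e ^ i) (cT T hN e w / w)
      = cT T hN (e ^ (i + 1)) w / cT T hN (e ^ i) w := by
    intro i
    rw [map_div, cT_cT, ← pow_succ]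
  calc ∏ i ∈ range ℓ, cT T hN (e ^ i) (cT T hN e w / w)
      = ∏ i ∈ range ℓ, (cT T hN (e ^ (i + 1)) w / cT T hN (e ^ i) w) :=
        Finset.prod_congr rfl fun i _ => key i
    _ = cT T hN (e ^ ℓ) w / cT T hN (e ^ 0) w := Finset.prod_range_div (fun i => cT T hN (e ^ i) w) ℓ
    _ = 1 := by rw [← hord, pow_orderOf_eq_one, pow_zero, cT_one, div_self']

end Norm

end LucidoAux

namespace LucidoAux

open Finset

variable {G : Type*} [Group G]

section Norm2

variable (T : Subgroup G) [IsMulCommutative T] [Finite G] (hN : T.Normal)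

lemma norm_coef_dvd {e : G} {q : ℕ} (hq : 0 < q) (hord : orderOf e = q) {c : ℕ}
    (hc : q ∣ c) (v : ↥T) :
    ∏ i ∈ range q, cT T hN (e ^ (i * c)) v = v ^ q := by
  have : ∀ i ∈ range q, cT T hN (e ^ (i * c)) v = v := by
    intro i _
    have : e ^ (i * c) = 1 := orderOf_dvd_iff_pow_eq_one.mp (hord ▸ hc.mul_left i)
    rw [this, cT_one]
  rw [Finset.prod_congr rfl this, Finset.prod_const, card_range]

lemma norm_coef_eq_one {e : G} {q : ℕ} (hq : q.Prime) (hord : orderOf e = q)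
    (hfree : ∀ n ∈ T, e * n * e⁻¹ = n → n = 1) {c : ℕ} (hc : ¬ q ∣ c) (v : ↥T) :
    ∏ i ∈ range q, cT T hN (e ^ (i * c)) v = 1 := by
  haveI : Fact q.Prime := ⟨hq⟩
  -- find the modular inverse of c
  have hc0 : (c : ZMod q) ≠ 0 := by
    rwa [Ne, ZMod.natCast_eq_zero_iff]
  set u : ℕ := ((c : ZMod q)⁻¹).val with hu
  have hcu : (c * u) % q = 1 % q := by
    have : ((c * u : ℕ) : ZMod q) = ((1 : ℕ) : ZMod q) := by
      push_cast [hu]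
      rw [ZMod.natCast_val, ZMod.cast_id]
      exact mul_inv_cancel₀ hc0
    rwa [ZMod.natCast_eq_natCast_iff'] at this
  have h1q : 1 % q = 1 := Nat.mod_eq_of_lt hq.one_lt
  have comp1 : ∀ i < q, (i * c % q) * u % q = i := by
    intro i hi
    rw [Nat.mod_mul_mod, mul_assoc, Nat.mul_mod, hcu, h1q, mul_one, Nat.mod_mod_of_dvd _ dvd_rfl, Nat.mod_eq_of_lt hi]
  have comp2 : ∀ i < q, (i * u % q) * c % q = i := by
    intro i hi
    rw [Nat.mod_mul_mod, mul_assoc, mul_comm u c, Nat.mul_mod, hcu, h1q, mul_one, Nat.mod_mod_of_dvd _ dvd_rfl, Nat.mod_eq_of_lt hi]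
  have step : ∀ i, cT T hN (e ^ (i * c)) v = cT T hN (e ^ (i * c % q)) v := by
    intro i
    rw [← hord, pow_mod_orderOf]
  calc ∏ i ∈ range q, cT T hN (e ^ (i * c)) v
      = ∏ i ∈ range q, cT T hN (e ^ (i * c % q)) v := Finset.prod_congr rfl fun i _ => step i
    _ = ∏ j ∈ range q, cT T hN (e ^ j) v := by
        apply Finset.prod_nbij' (fun i => i * c % q) (fun j => j * u % q)
        · intro a ha; exact mem_range.mpr (Nat.mod_lt _ hq.pos)
        · intro a ha; exact mem_range.mpr (Nat.mod_lt _ hq.pos)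
        · intro a ha; exact comp1 a (mem_range.mp ha)
        · intro a ha; exact comp2 a (mem_range.mp ha)
        · intro a ha; rfl
    _ = 1 := norm_eq_one T hN hord hfree v

end Norm2

end LucidoAux

namespace LucidoAux

open Finset

variable {G : Type*} [Group G]

section Comp

variable (T : Subgroup G) [IsMulCommutative T] [Finite G] (hN : T.Normal)

omit hN in
lemma exists_ne_one_of_ne_bot (hTbot : T ≠ ⊥) : ∃ v : ↥T, v ≠ 1 := by
  by_contra h
  push_neg at h
  apply hTbot
  apply (Subgroup.eq_bot_iff_forall T).mpr
  intro x hx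
  exact congrArg Subtype.val (h ⟨x, hx⟩)

lemma pow_contradiction {p q : ℕ} (hp : p.Prime) (hq : q.Prime) (hpq : p ≠ q)
    (hTp : ∀ x ∈ T, x ^ p = 1) (hTbot : T ≠ ⊥) {v : ↥T} (hv : v ≠ 1)
    (hvq : v ^ q = 1) : False := by
  have hvp : v ^ p = 1 := by
    ext
    push_cast
    exact hTp _ v.2
  have h1 : orderOf v ∣ p := orderOf_dvd_of_pow_eq_one hvp
  have h2 : orderOf v ∣ q := orderOf_dvd_of_pow_eq_one hvq
  have : orderOf v ∣ 1 := ((Nat.coprime_primes hp hq).mpr hpq) ▸ Nat.dvd_gcd h1 h2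
  exact hv (orderOf_eq_one_iff.mp (Nat.eq_one_of_dvd_one this))

include hN in
/-- A coclique pair `(p,q)`: commuting independent elements of order `q` acting freely on a
normal `p`-subgroup gives a contradiction. -/
lemma compA {p q : ℕ} (hp : p.Prime) (hq : q.Prime) (hpq : p ≠ q)
    (hTp : ∀ x ∈ T, x ^ p = 1) (hTbot : T ≠ ⊥)
    {a b : G} (hab : Commute a b) (ha : orderOf a = q) (hb : orderOf b = q)
    (hnab : ∀ j, 0 < j → j < q → a * b ^ j ≠ 1)
    (hfree : ∀ x : G, orderOf x = q → ∀ n ∈ T, x * n * x⁻¹ = n → n = 1) : False := by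
  haveI : Fact q.Prime := ⟨hq⟩
  obtain ⟨v, hv⟩ := exists_ne_one_of_ne_bot T hTbot
  have hordj : ∀ j < q, orderOf (a * b ^ j) = q := by
    intro j hj
    rcases Nat.eq_zero_or_pos j with rfl | hj0
    · simpa using ha
    · apply orderOf_eq_prime
      · have hbjq : (b ^ j) ^ q = 1 := by
          rw [← pow_mul, mul_comm, pow_mul, ← hb, pow_orderOf_eq_one, one_pow]
        have haq : a ^ q = 1 := by rw [← ha]; exact pow_orderOf_eq_one a
        rw [(hab.pow_right j).mul_pow, haq, hbjq, one_mul]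
      · exact hnab j hj0 hj
  have hD1 : ∏ j ∈ range q, ∏ i ∈ range q, cT T hN ((a * b ^ j) ^ i) v = 1 :=
    Finset.prod_eq_one fun j hj =>
      norm_eq_one T hN (hordj j (mem_range.mp hj))
        (hfree _ (hordj j (mem_range.mp hj))) v
  have hterm : ∀ j i : ℕ, cT T hN ((a * b ^ j) ^ i) v
      = cT T hN (a ^ i) (cT T hN (b ^ (i * j)) v) := by
    intro j i
    rw [cT_cT]
    congr 1
    rw [(hab.pow_right j).mul_pow, ← pow_mul, mul_comm j i]
  have hD2 : ∏ j ∈ range q, ∏ i ∈ range q, cT T hN ((a * b ^ j) ^ i) v = v ^ q := by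
    calc ∏ j ∈ range q, ∏ i ∈ range q, cT T hN ((a * b ^ j) ^ i) v
        = ∏ j ∈ range q, ∏ i ∈ range q, cT T hN (a ^ i) (cT T hN (b ^ (i * j)) v) :=
          Finset.prod_congr rfl fun j _ => Finset.prod_congr rfl fun i _ => hterm j i
      _ = ∏ i ∈ range q, ∏ j ∈ range q, cT T hN (a ^ i) (cT T hN (b ^ (i * j)) v) :=
          Finset.prod_comm
      _ = ∏ i ∈ range q, cT T hN (a ^ i) (∏ j ∈ range q, cT T hN (b ^ (j * i)) v) := by
          refine Finset.prod_congr rfl fun i _ => ?_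
          rw [map_prod]
          exact Finset.prod_congr rfl fun j _ => by rw [mul_comm i j]
      _ = v ^ q := by
          rw [Finset.prod_eq_single_of_mem 0 (mem_range.mpr hq.pos)]
          · rw [norm_coef_dvd T hN hq.pos hb (dvd_zero q) v, pow_zero, cT_one]
          · intro i hi hi0
            rw [norm_coef_eq_one T hN hq hb (hfree b hb)
                (Nat.not_dvd_of_pos_of_lt (Nat.pos_of_ne_zero hi0) (mem_range.mp hi)) v,
              map_one]
  exact pow_contradiction T hp hq hpq hTp hTbot hv (hD2.symm.trans hD1)

end Comp

end LucidoAux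

namespace LucidoAux

open Finset

variable {G : Type*} [Group G]

section CompB

variable (T : Subgroup G) [IsMulCommutative T] [Finite G] (hN : T.Normal)

omit hN in
lemma conj_iterate {m y : G} {s : ℕ} (hrel : y * m * y⁻¹ = m ^ s) :
    ∀ j k : ℕ, y ^ j * m ^ k * (y ^ j)⁻¹ = m ^ (k * s ^ j) := by
  intro j
  induction j with
  | zero => intro k; simp
  | succ j ih =>
    intro k
    have h1 : y ^ (j + 1) * m ^ k * (y ^ (j + 1))⁻¹
        = y * (y ^ j * m ^ k * (y ^ j)⁻¹) * y⁻¹ := by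
      rw [pow_succ']; group
    rw [h1, ih k, ← conj_pow, hrel, ← pow_mul]
    congr 1
    rw [pow_succ]
    ring
  
include hN in
/-- A coclique pair: an element of order `r` acting nontrivially on a cyclic group of order `q`,
with everything acting freely on a normal `p`-subgroup, gives a contradiction. -/
lemma compB {p q r : ℕ} (hp : p.Prime) (hq : q.Prime) (hr : r.Prime) (hpq : p ≠ q)
    (hTp : ∀ x ∈ T, x ^ p = 1) (hTbot : T ≠ ⊥)
    {m y : G} (hm : orderOf m = q) (hy : orderOf y = r) {s : ℕ}
    (hrel : y * m * y⁻¹ = m ^ s) (hs1 : ¬ s ≡ 1 [MOD q])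
    (hfreeq : ∀ x : G, orderOf x = q → ∀ n ∈ T, x * n * x⁻¹ = n → n = 1)
    (hfreer : ∀ x : G, orderOf x = r → ∀ n ∈ T, x * n * x⁻¹ = n → n = 1) : False := by
  haveI : Fact q.Prime := ⟨hq⟩
  haveI : Fact r.Prime := ⟨hr⟩
  obtain ⟨v, hv⟩ := exists_ne_one_of_ne_bot T hTbot
  have hL := conj_iterate hrel
  -- s^r ≡ 1 mod q
  have hyr : y ^ r = 1 := by rw [← hy]; exact pow_orderOf_eq_one y
  have hsr : s ^ r ≡ 1 [MOD q] := by
    have := hL r 1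
    rw [hyr, one_mul, inv_one, mul_one, pow_one, one_mul] at this
    have h2 : m ^ (s ^ r) = m ^ 1 := by rw [← this, pow_one]
    have := (pow_eq_pow_iff_modEq.mp h2)
    rwa [hm] at this
  set σ : ZMod q := (s : ZMod q) with hσ
  have hσ1 : σ ≠ 1 := by
    intro h
    apply hs1
    have : ((s : ℕ) : ZMod q) = ((1 : ℕ) : ZMod q) := by rw [← hσ, h, Nat.cast_one]
    exact (ZMod.natCast_eq_natCast_iff _ _ _).mp this
  have hσr : σ ^ r = 1 := by
    have : ((s ^ r : ℕ) : ZMod q) = ((1 : ℕ) : ZMod q) :=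
      (ZMod.natCast_eq_natCast_iff _ _ _).mpr hsr
    rw [Nat.cast_pow, Nat.cast_one] at this
    exact this
  have hordσ : orderOf σ = r := orderOf_eq_prime hσr hσ1
  -- the conjugates of y
  set z : ℕ → G := fun i => m ^ i * y * (m ^ i)⁻¹ with hz
  have hordz : ∀ i, orderOf (z i) = r := by
    intro i
    have h1 : z i = (MulAut.conj (m ^ i)) y := rfl
    rw [h1]
    have h2 : orderOf ((MulAut.conj (m ^ i)) y) = orderOf y :=
      orderOf_injective (MulAut.conj (m ^ i)).toMonoidHom (MulAut.conj (m ^ i)).injective y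
    rw [h2]; exact hy
  set c : ℕ → ℕ := fun j => q + 1 - s ^ j % q with hc
  have hsjq : ∀ j, s ^ j % q ≤ q + 1 := fun j => le_of_lt (lt_of_lt_of_le
    (Nat.mod_lt _ hq.pos) (by omega))
  have hzij : ∀ i j : ℕ, (z i) ^ j = m ^ (i * c j) * y ^ j := by
    intro i j
    have h1 : (z i) ^ j = m ^ i * y ^ j * (m ^ i)⁻¹ := conj_pow
    have h2 : y ^ j * (m ^ i) * (y ^ j)⁻¹ = m ^ (i * s ^ j) := hL j i
    have h3 : (z i) ^ j = (m ^ i * (m ^ (i * s ^ j))⁻¹) * y ^ j := by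
      rw [h1, ← h2]; group
    have h4 : m ^ (i * c j) * m ^ (i * s ^ j) = m ^ i := by
      rw [← pow_add]
      have hmod : i * c j + i * s ^ j ≡ i [MOD q] := by
        calc i * c j + i * s ^ j
            ≡ i * c j + i * (s ^ j % q) [MOD q] :=
              Nat.ModEq.add_left _ (Nat.ModEq.mul_left i (Nat.mod_modEq _ q)).symm
          _ = i * (c j + s ^ j % q) := by ring
          _ = i * (q + 1) := by rw [hc]; simp only; rw [Nat.sub_add_cancel (hsjq j)]
          _ = i * q + i := by ring
          _ ≡ 0 + i [MOD q] := Nat.ModEq.add_right i (Nat.modEq_zero_iff_dvd.mpr ⟨i, mul_comm i q⟩)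
          _ = i := zero_add i
      exact pow_eq_pow_iff_modEq.mpr (by rw [hm]; exact hmod)
    have h5 : m ^ i * (m ^ (i * s ^ j))⁻¹ = m ^ (i * c j) := by
      rw [← h4]; group
    rw [h3, h5]
  have hc0 : q ∣ c 0 := by
    have : c 0 = q := by
      rw [hc]; simp only [pow_zero]
      rw [Nat.mod_eq_of_lt hq.one_lt]
      omega
    rw [this]
  have hcj : ∀ j, 0 < j → j < r → ¬ q ∣ c j := by
    intro j hj0 hjr hdvd
    have h0 : ((c j : ℕ) : ZMod q) = 0 := (ZMod.natCast_eq_zero_iff _ _).mpr hdvd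
    have h1 : ((c j : ℕ) : ZMod q) = 1 - σ ^ j := by
      rw [hc]; simp only
      rw [Nat.cast_sub (hsjq j)]
      push_cast
      rw [ZMod.natCast_self]
      ring_nf
      rw [ZMod.natCast_mod]
      push_cast
      ring
    rw [h1] at h0
    have : σ ^ j = 1 := by
      have := sub_eq_zero.mp h0
      exact this.symm
    exact pow_ne_one_of_lt_orderOf (Nat.pos_iff_ne_zero.mp hj0) (hordσ ▸ hjr) this
  have hD1 : ∏ i ∈ range q, ∏ j ∈ range r, cT T hN ((z i) ^ j) v = 1 :=
    Finset.prod_eq_one fun i _ =>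
      norm_eq_one T hN (hordz i) (hfreer _ (hordz i)) v
  have hD2 : ∏ i ∈ range q, ∏ j ∈ range r, cT T hN ((z i) ^ j) v = v ^ q := by
    calc ∏ i ∈ range q, ∏ j ∈ range r, cT T hN ((z i) ^ j) v
        = ∏ i ∈ range q, ∏ j ∈ range r, cT T hN (m ^ (i * c j)) (cT T hN (y ^ j) v) := by
          refine Finset.prod_congr rfl fun i _ => Finset.prod_congr rfl fun j _ => ?_
          rw [hzij i j, ← cT_cT]
      _ = ∏ j ∈ range r, ∏ i ∈ range q, cT T hN (m ^ (i * c j)) (cT T hN (y ^ j) v) :=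
          Finset.prod_comm
      _ = v ^ q := by
          rw [Finset.prod_eq_single_of_mem 0 (mem_range.mpr hr.pos)]
          · rw [norm_coef_dvd T hN hq.pos hm hc0, pow_zero, cT_one]
          · intro j hj hj0
            rw [norm_coef_eq_one T hN hq hm (hfreeq m hm)
                (hcj j (Nat.pos_of_ne_zero hj0) (mem_range.mp hj))]
  exact pow_contradiction T hp hq hpq hTp hTbot hv (hD2.symm.trans hD1)

end CompB

end LucidoAux

namespace LucidoAux

open Finset

variable {G : Type*} [Group G]

/-- Lift element orders along a surjective homomorphism of finite groups. -/
lemma exists_orderOf_eq_of_surjective [Finite G] {Q : Type*} [Group Q] {f : G →* Q}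
    (hf : Function.Surjective f) (x : Q) : ∃ g : G, orderOf g = orderOf x := by
  obtain ⟨g₀, rfl⟩ := hf x
  have hd : orderOf (f g₀) ∣ orderOf g₀ := orderOf_map_dvd f g₀
  have hn0 : orderOf g₀ ≠ 0 := (orderOf_pos g₀).ne'
  refine ⟨g₀ ^ (orderOf g₀ / orderOf (f g₀)), ?_⟩
  rw [orderOf_pow g₀, Nat.gcd_eq_right (Nat.div_dvd_of_dvd hd),
    Nat.div_div_self hd hn0]

/-- A nontrivial finite solvable group has a nontrivial abelian normal subgroup. -/
lemma exists_abelian_normal (hsolv : IsSolvable G) (hG : Nontrivial G) :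
    ∃ A : Subgroup G, A.Normal ∧ A ≠ ⊥ ∧ ∀ x ∈ A, ∀ y ∈ A, Commute x y := by
  obtain ⟨n, hn⟩ := hsolv.solvable
  -- find minimal n with derivedSeries G n = ⊥
  have hex : ∃ n, derivedSeries G n = ⊥ := ⟨n, hn⟩
  classical
  let n₀ := Nat.find hex
  have hn₀ : derivedSeries G n₀ = ⊥ := Nat.find_spec hex
  have hn₀0 : n₀ ≠ 0 := by
    intro h
    have : derivedSeries G 0 = ⊥ := h ▸ hn₀
    rw [derivedSeries_zero] at this
    obtain ⟨g, hg⟩ := exists_ne (1 : G)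
    exact hg (Subgroup.mem_bot.mp (this ▸ Subgroup.mem_top g))
  obtain ⟨k, hk⟩ := Nat.exists_eq_succ_of_ne_zero hn₀0
  refine ⟨derivedSeries G k, derivedSeries_normal G k, ?_, ?_⟩
  · exact Nat.find_min hex (by omega)
  · have hcomm : ⁅derivedSeries G k, derivedSeries G k⁆ = ⊥ := by
      have : derivedSeries G (k + 1) = ⊥ := by rw [show k + 1 = n₀ from hk.symm]; exact hn₀
      rwa [derivedSeries_succ] at this
    intro x hx y hy
    have := Subgroup.commutator_eq_bot_iff_le_centralizer.mp hcomm hx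
    have := Subgroup.mem_centralizer_iff.mp this
    exact (this y hy).symm

/-- Cauchy's theorem, `Nat.card` version. -/
lemma cauchy [Finite G] {t : ℕ} (ht : t.Prime) (hdvd : t ∣ Nat.card G) :
    ∃ g : G, orderOf g = t := by
  haveI := Fintype.ofFinite G
  haveI : Fact t.Prime := ⟨ht⟩
  rw [Nat.card_eq_fintype_card] at hdvd
  exact exists_prime_orderOf_dvd_card t hdvd

/-- The `t`-torsion subgroup of a nontrivial abelian normal subgroup. -/
lemma exists_torsion [Finite G] (A : Subgroup G) (hA : A.Normal)
    (hcomm : ∀ x ∈ A, ∀ y ∈ A, Commute x y) {t : ℕ} (ht : t.Prime)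
    (htA : t ∣ Nat.card A) :
    ∃ T : Subgroup G, T.Normal ∧ T ≠ ⊥ ∧ (∀ x ∈ T, x ^ t = 1) ∧ ∀ x ∈ T, x ∈ A := by
  let Tsub : Subgroup G :=
    { carrier := {x | x ∈ A ∧ x ^ t = 1}
      one_mem' := ⟨A.one_mem, one_pow t⟩
      mul_mem' := by
        rintro x y ⟨hxA, hxt⟩ ⟨hyA, hyt⟩
        refine ⟨A.mul_mem hxA hyA, ?_⟩
        rw [(hcomm x hxA y hyA).mul_pow, hxt, hyt, one_mul]
      inv_mem' := by
        rintro x ⟨hxA, hxt⟩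
        exact ⟨A.inv_mem hxA, by rw [inv_pow, hxt, inv_one]⟩ }
  have hmemT : ∀ x : G, x ∈ Tsub ↔ x ∈ A ∧ x ^ t = 1 := fun x => Iff.rfl
  refine ⟨Tsub, ?_, ?_, fun x hx => ((hmemT x).mp hx).2, fun x hx => ((hmemT x).mp hx).1⟩
  · constructor
    intro x hx g
    obtain ⟨hxA, hxt⟩ := (hmemT x).mp hx
    refine (hmemT _).mpr ⟨hA.conj_mem x hxA g, ?_⟩
    rw [conj_pow, hxt, mul_one, mul_inv_cancel]
  · -- nontrivial: Cauchy in A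
    obtain ⟨a, ha⟩ := cauchy (G := ↥A) ht htA
    intro hbot
    have haA : (a : G) ∈ A := a.2
    have hat : (a : G) ^ t = 1 := by
      have : a ^ t = 1 := by rw [← ha]; exact pow_orderOf_eq_one a
      exact_mod_cast congrArg Subtype.val this
    have hmem : (a : G) ∈ Tsub := (hmemT _).mpr ⟨haA, hat⟩
    rw [hbot] at hmem
    have : (a : G) = 1 := Subgroup.mem_bot.mp hmem
    have : a = 1 := by ext; exact this
    rw [this, orderOf_one] at ha
    exact ht.one_lt.ne' ha.symm

/-- Prime divisors of the order of a `t`-torsion subgroup all equal `t`. -/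
lemma primes_of_torsion [Finite G] (T : Subgroup G) {t : ℕ} (ht : t.Prime)
    (h : ∀ x ∈ T, x ^ t = 1) {s : ℕ} (hs : s.Prime) (hsT : s ∣ Nat.card T) : s = t := by
  obtain ⟨x, hx⟩ := cauchy (G := ↥T) hs hsT
  have hxt : x ^ t = 1 := by
    ext
    push_cast
    exact h _ x.2
  have : s ∣ t := hx ▸ orderOf_dvd_of_pow_eq_one hxt
  exact (Nat.prime_dvd_prime_iff_eq hs ht).mp this

end LucidoAux

namespace LucidoAux

open Finset

variable {G : Type*} [Group G]

lemma card_comap_mk' [Finite G] (T : Subgroup G) [hTn : T.Normal]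
    (Kb : Subgroup (G ⧸ T)) :
    Nat.card (Kb.comap (QuotientGroup.mk' T)) = Nat.card Kb * Nat.card T := by
  set π := QuotientGroup.mk' T with hπ
  set H₁ := Kb.comap π with hH₁
  have hTle : T ≤ H₁ := by
    intro x hx
    have hker : π x = 1 := by
      rw [← MonoidHom.mem_ker, QuotientGroup.ker_mk']
      exact hx
    rw [hH₁, Subgroup.mem_comap, hker]
    exact Kb.one_mem
  let f : ↥H₁ →* G ⧸ T := π.comp H₁.subtype
  have hker : f.ker = T.subgroupOf H₁ := by
    ext x
    simp only [f, MonoidHom.mem_ker, MonoidHom.comp_apply, Subgroup.mem_subgroupOf]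
    have : (↑x ∈ T) ↔ ↑x ∈ MonoidHom.ker π := by rw [hπ, QuotientGroup.ker_mk' T]
    rw [this, MonoidHom.mem_ker]
    rfl
  have hrange : f.range = Kb := by
    rw [MonoidHom.range_comp, Subgroup.range_subtype]
    exact Subgroup.map_comap_eq_self_of_surjective (QuotientGroup.mk'_surjective T) Kb
  calc Nat.card ↥H₁
      = Nat.card (↥H₁ ⧸ T.subgroupOf H₁) * Nat.card (T.subgroupOf H₁) :=
        Subgroup.card_eq_card_quotient_mul_card_subgroup _
    _ = Nat.card Kb * Nat.card T := by
        congr 1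
        · rw [← hker, ← hrange]
          exact Nat.card_congr (QuotientGroup.quotientKerEquivRange f).toEquiv
        · exact Nat.card_congr (Subgroup.subgroupOfEquivOfLe hTle).toEquiv

end LucidoAux

namespace LucidoAux

open Finset

universe u

/-- Existence of a "biprimary" subgroup of a finite solvable group whose order is
divisible by two given primes and by no other prime (a Hall `{q,r}`-subgroup lite). -/
lemma exists_biprimary : ∀ (n : ℕ) (G : Type u) [Group G] [Finite G], Nat.card G = n →
    IsSolvable G → ∀ q r : ℕ, q.Prime → r.Prime → q ≠ r → q ∣ Nat.card G →
    r ∣ Nat.card G →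
    ∃ K : Subgroup G, q ∣ Nat.card K ∧ r ∣ Nat.card K ∧
      ∀ s : ℕ, s.Prime → s ∣ Nat.card K → s = q ∨ s = r := by
  intro n
  induction n using Nat.strong_induction_on with
  | _ n ih =>
  intro G _ _ hcard hsolv q r hq hr hqr hqn hrn
  subst hcard
  have hpos : 0 < Nat.card G := Nat.card_pos
  have hnt : Nontrivial G := by
    haveI := Fintype.ofFinite G
    rw [← Fintype.one_lt_card_iff_nontrivial]
    have h1 := Nat.le_of_dvd hpos hqn
    have h2 := hq.two_le
    rw [Nat.card_eq_fintype_card] at h1 hpos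
    omega
  obtain ⟨A, hAn, hAb, hAc⟩ := exists_abelian_normal hsolv hnt
  have hA1 : Nat.card A ≠ 1 := fun h => hAb (Subgroup.card_eq_one.mp h)
  obtain ⟨t, ht, htA⟩ := Nat.exists_prime_and_dvd hA1
  obtain ⟨T, hTn, hTb, hTt, _⟩ := exists_torsion A hAn hAc ht htA
  haveI := hTn
  have hT1 : Nat.card T ≠ 1 := fun h => hTb (Subgroup.card_eq_one.mp h)
  have hTpos : 0 < Nat.card T := Nat.card_pos
  have hQpos : 0 < Nat.card (G ⧸ T) := Nat.card_pos
  have hsplit : Nat.card G = Nat.card (G ⧸ T) * Nat.card T :=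
    Subgroup.card_eq_card_quotient_mul_card_subgroup T
  have hQlt : Nat.card (G ⧸ T) < Nat.card G := by
    have h2 : 2 ≤ Nat.card T := by omega
    calc Nat.card (G ⧸ T) < Nat.card (G ⧸ T) * 2 := by omega
      _ ≤ Nat.card (G ⧸ T) * Nat.card T := Nat.mul_le_mul_left _ h2
      _ = Nat.card G := hsplit.symm
  have hprimesT : ∀ s, s.Prime → s ∣ Nat.card T → s = t :=
    fun s hs hd => primes_of_torsion T ht hTt hs hd
  have hTle : ∀ Kb : Subgroup (G ⧸ T), T ≤ Kb.comap (QuotientGroup.mk' T) := by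
    intro Kb x hx
    have hker : QuotientGroup.mk' T x = 1 := by
      rw [← MonoidHom.mem_ker, QuotientGroup.ker_mk']
      exact hx
    rw [Subgroup.mem_comap, hker]
    exact Kb.one_mem
  by_cases hqQ : q ∣ Nat.card (G ⧸ T)
  · by_cases hrQ : r ∣ Nat.card (G ⧸ T)
    · -- recurse on the quotient
      obtain ⟨Kb, hKq, hKr, hKp⟩ :=
        ih (Nat.card (G ⧸ T)) hQlt (G ⧸ T) rfl (by haveI : Group.IsSolvable G := hsolv; exact (inferInstance : Group.IsSolvable (G ⧸ T))) q r hq hr hqr hqQ hrQ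
      have hKbpos : 0 < Nat.card Kb := Nat.card_pos
      set H₁ := Kb.comap (QuotientGroup.mk' T) with hH₁def
      have hH₁card : Nat.card H₁ = Nat.card Kb * Nat.card T := card_comap_mk' T Kb
      by_cases htqr : t = q ∨ t = r
      · refine ⟨H₁, ?_, ?_, ?_⟩
        · rw [hH₁card]; exact hKq.mul_right _
        · rw [hH₁card]; exact hKr.mul_right _
        · intro s hs hsd
          rw [hH₁card] at hsd
          rcases (Nat.Prime.dvd_mul hs).mp hsd with h | h
          · exact hKp s hs h
          · rcases htqr with h' | h'
            · exact Or.inl ((hprimesT s hs h).trans h')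
            · exact Or.inr ((hprimesT s hs h).trans h')
      · push_neg at htqr
        obtain ⟨htq, htr⟩ := htqr
        -- Schur–Zassenhaus inside H₁
        set N := T.subgroupOf H₁ with hNdef
        haveI : N.Normal := hTn.subgroupOf H₁
        have hNcard : Nat.card N = Nat.card T :=
          Nat.card_congr (Subgroup.subgroupOfEquivOfLe (hTle Kb)).toEquiv
        have hNindex : N.index = Nat.card Kb := by
          have h1 := Subgroup.card_eq_card_quotient_mul_card_subgroup N
          rw [Subgroup.index_eq_card]
          rw [hNcard] at h1
          rw [hH₁card] at h1
          exact Nat.eq_of_mul_eq_mul_right hTpos h1.symm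
        have hcop : Nat.Coprime (Nat.card N) N.index := by
          rw [hNcard, hNindex]
          by_contra hnc
          obtain ⟨s, hs, hsT, hsK⟩ := Nat.Prime.not_coprime_iff_dvd.mp hnc
          have hst := hprimesT s hs hsT
          rcases hKp s hs hsK with h | h
          · exact htq (hst ▸ h)
          · exact htr (hst ▸ h)
        obtain ⟨Kc, hKc⟩ := Subgroup.exists_right_complement'_of_coprime hcop
        have hm := hKc.card_mul
        rw [hNcard] at hm
        rw [hH₁card] at hm
        have hKccard : Nat.card Kc = Nat.card Kb := by
          have : Nat.card T * Nat.card Kc = Nat.card T * Nat.card Kb := by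
            rw [hm]; ring
          exact Nat.eq_of_mul_eq_mul_left hTpos this
        refine ⟨(Kc.map H₁.subtype), ?_, ?_, ?_⟩
        all_goals
          rw [show Nat.card (Kc.map H₁.subtype) = Nat.card Kb from
            ((Nat.card_congr (Subgroup.equivMapOfInjective Kc _
              H₁.subtype_injective).toEquiv).symm.trans hKccard)]
        · exact hKq
        · exact hKr
        · exact hKp
    · -- r does not divide the quotient: t = r
      have hrT : r ∣ Nat.card T := by
        rcases (Nat.Prime.dvd_mul hr).mp (hsplit ▸ hrn) with h | h
        · exact absurd h hrQ
        · exact h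
      have htr : r = t := hprimesT r hr hrT
      obtain ⟨x, hx⟩ := cauchy (G := G ⧸ T) hq hqQ
      have hKbcard : Nat.card (Subgroup.zpowers x) = q := by
        rw [Nat.card_zpowers, hx]
      refine ⟨(Subgroup.zpowers x).comap (QuotientGroup.mk' T), ?_, ?_, ?_⟩
      all_goals rw [card_comap_mk' T, hKbcard]
      · exact dvd_mul_right q _
      · exact hrT.mul_left q
      · intro s hs hsd
        rcases (Nat.Prime.dvd_mul hs).mp hsd with h | h
        · exact Or.inl ((Nat.prime_dvd_prime_iff_eq hs hq).mp h)
        · exact Or.inr ((hprimesT s hs h).trans htr.symm)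
  · -- q does not divide the quotient: t = q
    have hqT : q ∣ Nat.card T := by
      rcases (Nat.Prime.dvd_mul hq).mp (hsplit ▸ hqn) with h | h
      · exact absurd h hqQ
      · exact h
    have htq : q = t := hprimesT q hq hqT
    have hrQ : r ∣ Nat.card (G ⧸ T) := by
      rcases (Nat.Prime.dvd_mul hr).mp (hsplit ▸ hrn) with h | h
      · exact h
      · exact absurd ((hprimesT r hr h).trans htq.symm) (Ne.symm hqr)
    obtain ⟨x, hx⟩ := cauchy (G := G ⧸ T) hr hrQ
    have hKbcard : Nat.card (Subgroup.zpowers x) = r := by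
      rw [Nat.card_zpowers, hx]
    refine ⟨(Subgroup.zpowers x).comap (QuotientGroup.mk' T), ?_, ?_, ?_⟩
    all_goals rw [card_comap_mk' T, hKbcard]
    · exact hqT.mul_left r
    · exact dvd_mul_right r _
    · intro s hs hsd
      rcases (Nat.Prime.dvd_mul hs).mp hsd with h | h
      · exact Or.inr ((Nat.prime_dvd_prime_iff_eq hs hr).mp h)
      · exact Or.inl ((hprimesT s hs h).trans htq.symm)

end LucidoAux

namespace LucidoAux

open Finset

universe u

lemma exists_mod_inverse {q c : ℕ} (hq : q.Prime) (hc : ¬ q ∣ c) :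
    ∃ u, c * u ≡ 1 [MOD q] := by
  haveI : Fact q.Prime := ⟨hq⟩
  have hc0 : (c : ZMod q) ≠ 0 := by rwa [Ne, ZMod.natCast_eq_zero_iff]
  refine ⟨((c : ZMod q)⁻¹).val, ?_⟩
  have : ((c * ((c : ZMod q)⁻¹).val : ℕ) : ZMod q) = ((1 : ℕ) : ZMod q) := by
    push_cast
    rw [ZMod.natCast_val, ZMod.cast_id]
    exact mul_inv_cancel₀ hc0
  exact (ZMod.natCast_eq_natCast_iff _ _ _).mp this

lemma mem_zpowers_of_pow {K : Type*} [Group K] {a b : K} {q j : ℕ} (hq : q.Prime)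
    (hb : orderOf b = q) (hj0 : 0 < j) (hjq : j < q) (hab : a * b ^ j = 1) :
    b ∈ Subgroup.zpowers a := by
  obtain ⟨q', rfl⟩ : ∃ q', q = q' + 1 := ⟨q - 1, by omega⟩
  have ha : a = b ^ (j * q') := by
    have h1 : b ^ (j * q' + j) = 1 := by
      have : j * q' + j = j * (q' + 1) := by ring
      rw [this, mul_comm, pow_mul, ← hb, pow_orderOf_eq_one, one_pow]
    have h2 : a * b ^ j = b ^ (j * q') * b ^ j := by rw [← pow_add, h1, hab]
    exact mul_right_cancel h2
  have hk : ¬ (q' + 1) ∣ (j * q') := by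
    intro hdvd
    rcases (Nat.Prime.dvd_mul hq).mp hdvd with h | h
    · exact absurd h (Nat.not_dvd_of_pos_of_lt hj0 hjq)
    · rcases Nat.eq_zero_or_pos q' with rfl | hq'
      · norm_num at hq
      · exact absurd h (Nat.not_dvd_of_pos_of_lt hq' (by omega))
  obtain ⟨u, hu⟩ := exists_mod_inverse hq hk
  have hbu : b ^ (j * q' * u) = b ^ 1 := pow_eq_pow_iff_modEq.mpr (by rwa [hb])
  refine ⟨(u : ℤ), ?_⟩
  show a ^ (u : ℤ) = b
  rw [zpow_natCast, ha, ← pow_mul, hbu, pow_one]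

lemma nontrivial_of_prime_dvd_card {H : Type*} [Group H] [Finite H] {q : ℕ}
    (hq : q.Prime) (h : q ∣ Nat.card H) : Nontrivial H := by
  haveI := Fintype.ofFinite H
  rw [← Fintype.one_lt_card_iff_nontrivial]
  have hpos : 0 < Nat.card H := Nat.card_pos
  have h1 := Nat.le_of_dvd hpos h
  have h2 := hq.two_le
  rw [Nat.card_eq_fintype_card] at h1 hpos
  omega

lemma orderOf_coe {G : Type*} [Group G] {K : Subgroup G} (x : ↥K) :
    orderOf (x : G) = orderOf x :=
  orderOf_injective K.subtype K.subtype_injective x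

lemma main3 {G : Type u} [Group G] [Finite G] {p q r : ℕ}
    (hp : p.Prime) (hq : q.Prime) (hr : r.Prime)
    (hpq : p ≠ q) (hpr : p ≠ r) (hqr : q ≠ r)
    (T : Subgroup G) [IsMulCommutative T] (hTn : T.Normal) (hTb : T ≠ ⊥)
    (hTp : ∀ x ∈ T, x ^ p = 1)
    (hnpq : ∀ g : G, orderOf g ≠ p * q) (hnpr : ∀ g : G, orderOf g ≠ p * r)
    (hnqr : ∀ g : G, orderOf g ≠ q * r)
    (K : Subgroup G) (hKr : r ∣ Nat.card K)
    (A' : Subgroup ↥K) (hA'n : A'.Normal) (hA'c : ∀ x ∈ A', ∀ y ∈ A', Commute x y)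
    (hqA' : q ∣ Nat.card A') : False := by
  haveI : Fact p.Prime := ⟨hp⟩
  haveI : Fact q.Prime := ⟨hq⟩
  haveI : Fact r.Prime := ⟨hr⟩
  -- fixed-point-freeness of q- and r-elements on T
  have Fq : ∀ x : G, orderOf x = q → ∀ n ∈ T, x * n * x⁻¹ = n → n = 1 := by
    intro x hx n hnT hfix
    by_contra hn1
    have hordn : orderOf n = p := orderOf_eq_prime (hTp n hnT) hn1
    have hcomm : Commute x n := mul_inv_eq_iff_eq_mul.mp hfix
    have hco : Nat.Coprime (orderOf x) (orderOf n) := by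
      rw [hx, hordn]; exact (Nat.coprime_primes hq hp).mpr (Ne.symm hpq)
    have := hcomm.orderOf_mul_eq_mul_orderOf_of_coprime hco
    rw [hx, hordn] at this
    exact hnpq (x * n) (this.trans (mul_comm q p))
  have Fr : ∀ x : G, orderOf x = r → ∀ n ∈ T, x * n * x⁻¹ = n → n = 1 := by
    intro x hx n hnT hfix
    by_contra hn1
    have hordn : orderOf n = p := orderOf_eq_prime (hTp n hnT) hn1
    have hcomm : Commute x n := mul_inv_eq_iff_eq_mul.mp hfix
    have hco : Nat.Coprime (orderOf x) (orderOf n) := by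
      rw [hx, hordn]; exact (Nat.coprime_primes hr hp).mpr (Ne.symm hpr)
    have := hcomm.orderOf_mul_eq_mul_orderOf_of_coprime hco
    rw [hx, hordn] at this
    exact hnpr (x * n) (this.trans (mul_comm r p))
  -- the q-torsion subgroup of A'
  obtain ⟨T', hT'n, hT'b, hT'q, hT'A⟩ := exists_torsion A' hA'n hA'c hq hqA'
  letI : IsMulCommutative T' :=
    ⟨⟨fun x y => Subtype.ext (hA'c _ (hT'A _ x.2) _ (hT'A _ y.2))⟩⟩
  obtain ⟨a0, ha0⟩ := exists_ne_one_of_ne_bot T' hT'b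
  set a : ↥K := (a0 : ↥K) with hadef
  have haT' : a ∈ T' := a0.2
  have ha1 : a ≠ 1 := by
    intro h
    exact ha0 (by ext; exact congrArg Subtype.val h)
  have horda : orderOf a = q := orderOf_eq_prime (hT'q a haT') ha1
  have hordaG : orderOf (a : G) = q := (orderOf_coe a).trans horda
  by_cases hcyc : ∀ b ∈ T', b ∈ Subgroup.zpowers a
  · -- T' cyclic: an order-r element acts on ⟨a⟩
    obtain ⟨y, hy⟩ := cauchy (G := ↥K) hr hKr
    have hyG : orderOf (y : G) = r := (orderOf_coe y).trans hy
    have hyaT' : y * a * y⁻¹ ∈ T' := hT'n.conj_mem a haT' y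
    obtain ⟨sz, hsz⟩ := Subgroup.mem_zpowers_iff.mp (hcyc _ hyaT')
    set s : ℕ := (sz % (q : ℤ)).toNat with hsdef
    have hszs : a ^ (s : ℕ) = y * a * y⁻¹ := by
      rw [← hsz]
      have h1 : a ^ ((s : ℕ) : ℤ) = a ^ sz := by
        rw [hsdef, Int.toNat_of_nonneg (Int.emod_nonneg sz (by exact_mod_cast hq.ne_zero))]
        rw [← horda]
        exact zpow_mod_orderOf a sz
      rw [← zpow_natCast, h1]
    by_cases hfix : y * a * y⁻¹ = a
    · have hcomm : Commute y a := mul_inv_eq_iff_eq_mul.mp hfix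
      have hcommG : Commute (y : G) (a : G) := hcomm.map K.subtype
      have hco : Nat.Coprime (orderOf (y : G)) (orderOf (a : G)) := by
        rw [hyG, hordaG]; exact (Nat.coprime_primes hr hq).mpr (Ne.symm hqr)
      have := hcommG.orderOf_mul_eq_mul_orderOf_of_coprime hco
      rw [hyG, hordaG] at this
      exact hnqr _ (this.trans (mul_comm r q))
    · have hrelG : (y : G) * (a : G) * (y : G)⁻¹ = (a : G) ^ s := by
        have := congrArg (K.subtype) hszs.symm
        push_cast at this
        exact this
      have hs1 : ¬ s ≡ 1 [MOD q] := by
        intro hmod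
        apply hfix
        have h2 : a ^ s = a ^ 1 := pow_eq_pow_iff_modEq.mpr (by rwa [horda])
        rw [← hszs, h2, pow_one]
      exact compB T hTn hp hq hr hpq hTp hTb hordaG hyG hrelG hs1 Fq Fr
  · push_neg at hcyc
    obtain ⟨b, hbT', hbz⟩ := hcyc
    have hb1 : b ≠ 1 := fun h => hbz (h ▸ (Subgroup.zpowers a).one_mem)
    have hordb : orderOf b = q := orderOf_eq_prime (hT'q b hbT') hb1
    have hordbG : orderOf (b : G) = q := (orderOf_coe b).trans hordb
    have hcommab : Commute (a : G) (b : G) :=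
      (hA'c a (hT'A a haT') b (hT'A b hbT')).map K.subtype
    have hnab : ∀ j, 0 < j → j < q → (a : G) * (b : G) ^ j ≠ 1 := by
      intro j hj0 hjq habj
      apply hbz
      have habjK : a * b ^ j = 1 := by
        apply K.subtype_injective
        exact habj
      exact mem_zpowers_of_pow hq hordb hj0 hjq habjK
    exact compA T hTn hp hq hpq hTp hTb hcommab hordaG hordbG hnab Fq

lemma main2 {G : Type u} [Group G] [Finite G] (hsolv : IsSolvable G) {p q r : ℕ}
    (hp : p.Prime) (hq : q.Prime) (hr : r.Prime)
    (hpq : p ≠ q) (hpr : p ≠ r) (hqr : q ≠ r)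
    (hqG : q ∣ Nat.card G) (hrG : r ∣ Nat.card G)
    (T : Subgroup G) (hTn : T.Normal) (hTb : T ≠ ⊥) (hTp : ∀ x ∈ T, x ^ p = 1)
    (hTc : ∀ x ∈ T, ∀ y ∈ T, Commute x y) :
    (∃ g : G, orderOf g = p * q) ∨ (∃ g : G, orderOf g = p * r) ∨
      (∃ g : G, orderOf g = q * r) := by
  by_contra hcon
  push_neg at hcon
  obtain ⟨hnpq, hnpr, hnqr⟩ := hcon
  letI : IsMulCommutative T := ⟨⟨fun x y => Subtype.ext (hTc x x.2 y y.2)⟩⟩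
  obtain ⟨K, hKq, hKr, hKp⟩ :=
    exists_biprimary (Nat.card G) G rfl hsolv q r hq hr hqr hqG hrG
  have hKnt : Nontrivial ↥K := nontrivial_of_prime_dvd_card hq hKq
  obtain ⟨A', hA'n, hA'b, hA'c⟩ :=
    exists_abelian_normal (by haveI : Group.IsSolvable G := hsolv; exact (inferInstance : Group.IsSolvable ↥K)) hKnt
  have hA'1 : Nat.card A' ≠ 1 := fun h => hA'b (Subgroup.card_eq_one.mp h)
  obtain ⟨t', ht', ht'A⟩ := Nat.exists_prime_and_dvd hA'1
  have ht'K : t' ∣ Nat.card K := ht'A.trans (Subgroup.card_subgroup_dvd_card A')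
  rcases hKp t' ht' ht'K with rfl | rfl
  · exact main3 hp ht' hr hpq hpr hqr T hTn hTb hTp hnpq hnpr hnqr K hKr A' hA'n hA'c ht'A
  · refine main3 hp ht' hq hpr hpq (Ne.symm hqr) T hTn hTb hTp hnpr hnpq ?_ K hKq A' hA'n
      hA'c ht'A
    intro g h
    apply hnqr g
    rw [h, mul_comm]


end LucidoAux

namespace LucidoAux

universe u

lemma main_aux : ∀ (n : ℕ) (G : Type u) [Group G] [Finite G], Nat.card G = n →
    IsSolvable G → ∀ p q r : ℕ, p.Prime → q.Prime → r.Prime →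
    p ≠ q → p ≠ r → q ≠ r →
    p ∣ Nat.card G → q ∣ Nat.card G → r ∣ Nat.card G →
    (∃ g : G, orderOf g = p * q) ∨ (∃ g : G, orderOf g = p * r) ∨
      (∃ g : G, orderOf g = q * r) := by
  intro n
  induction n using Nat.strong_induction_on with
  | _ n ih =>
  intro G _ _ hcard hsolv p q r hp hq hr hpq hpr hqr hpG hqG hrG
  subst hcard
  have hnt : Nontrivial G := nontrivial_of_prime_dvd_card hp hpG
  obtain ⟨A, hAn, hAb, hAc⟩ := exists_abelian_normal hsolv hnt
  have hA1 : Nat.card A ≠ 1 := fun h => hAb (Subgroup.card_eq_one.mp h)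
  obtain ⟨t, ht, htA⟩ := Nat.exists_prime_and_dvd hA1
  obtain ⟨T, hTn, hTb, hTt, hTA⟩ := exists_torsion A hAn hAc ht htA
  have hTc : ∀ x ∈ T, ∀ y ∈ T, Commute x y :=
    fun x hx y hy => hAc x (hTA x hx) y (hTA y hy)
  by_cases htp : t = p
  · subst htp
    exact main2 hsolv ht hq hr hpq hpr hqr hqG hrG T hTn hTb hTt hTc
  · by_cases htq : t = q
    · subst htq
      rcases main2 hsolv ht hp hr (Ne.symm hpq) hqr hpr hpG hrG T hTn hTb hTt hTc with
        h | h | h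
      · obtain ⟨g, hg⟩ := h
        exact Or.inl ⟨g, by rw [hg, mul_comm]⟩
      · exact Or.inr (Or.inr h)
      · exact Or.inr (Or.inl h)
    · by_cases htr : t = r
      · subst htr
        rcases main2 hsolv ht hp hq (Ne.symm hpr) (Ne.symm hqr) hpq hpG hqG T hTn hTb hTt
          hTc with h | h | h
        · obtain ⟨g, hg⟩ := h
          exact Or.inr (Or.inl ⟨g, by rw [hg, mul_comm]⟩)
        · obtain ⟨g, hg⟩ := h
          exact Or.inr (Or.inr ⟨g, by rw [hg, mul_comm]⟩)
        · exact Or.inl h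
      · -- t is none of p,q,r: pass to the quotient
        haveI := hTn
        have hT1 : Nat.card T ≠ 1 := fun h => hTb (Subgroup.card_eq_one.mp h)
        have hTpos : 0 < Nat.card T := Nat.card_pos
        have hQpos : 0 < Nat.card (G ⧸ T) := Nat.card_pos
        have hsplit : Nat.card G = Nat.card (G ⧸ T) * Nat.card T :=
          Subgroup.card_eq_card_quotient_mul_card_subgroup T
        have hQlt : Nat.card (G ⧸ T) < Nat.card G := by
          have h2 : 2 ≤ Nat.card T := by omega
          calc Nat.card (G ⧸ T) < Nat.card (G ⧸ T) * 2 := by omega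
            _ ≤ Nat.card (G ⧸ T) * Nat.card T := Nat.mul_le_mul_left _ h2
            _ = Nat.card G := hsplit.symm
        have hdvd : ∀ s : ℕ, s.Prime → s ≠ t → s ∣ Nat.card G → s ∣ Nat.card (G ⧸ T) := by
          intro s hs hst hsG
          rcases (Nat.Prime.dvd_mul hs).mp (hsplit ▸ hsG) with h | h
          · exact h
          · exact absurd (primes_of_torsion T ht hTt hs h) hst
        have hsurj := QuotientGroup.mk'_surjective T
        rcases ih (Nat.card (G ⧸ T)) hQlt (G ⧸ T) rfl (by haveI : Group.IsSolvable G := hsolv; exact (inferInstance : Group.IsSolvable (G ⧸ T))) p q r hp hq hr hpq hpr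
            hqr (hdvd p hp (Ne.symm htp) hpG) (hdvd q hq (Ne.symm htq) hqG) (hdvd r hr (Ne.symm htr) hrG) with h | h | h
        · obtain ⟨g, hg⟩ := h
          obtain ⟨g', hg'⟩ := exists_orderOf_eq_of_surjective hsurj g
          exact Or.inl ⟨g', hg'.trans hg⟩
        · obtain ⟨g, hg⟩ := h
          obtain ⟨g', hg'⟩ := exists_orderOf_eq_of_surjective hsurj g
          exact Or.inr (Or.inl ⟨g', hg'.trans hg⟩)
        · obtain ⟨g, hg⟩ := h
          obtain ⟨g', hg'⟩ := exists_orderOf_eq_of_surjective hsurj g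
          exact Or.inr (Or.inr ⟨g', hg'.trans hg⟩)

end LucidoAux

/-- (Lucido) A finite solvable group has no coclique of size `3` in its Gruenberg–Kegel
graph: among any three distinct primes `p, q, r` dividing `|G|`, at least one of `pq`,
`pr`, `qr` is the order of an element of `G`. -/
theorem solvable_no_triple_coclique {G : Type*} [Group G] [Finite G]
    (hsolv : IsSolvable G) (p q r : ℕ) (hp : p.Prime) (hq : q.Prime) (hr : r.Prime)
    (hpq : p ≠ q) (hpr : p ≠ r) (hqr : q ≠ r)
    (hpG : p ∣ Nat.card G) (hqG : q ∣ Nat.card G) (hrG : r ∣ Nat.card G) :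
    (∃ g : G, orderOf g = p * q) ∨ (∃ g : G, orderOf g = p * r) ∨
      (∃ g : G, orderOf g = q * r) := by
  exact LucidoAux.main_aux (Nat.card G) G rfl hsolv p q r hp hq hr hpq hpr hqr hpG hqG hrG
end

section
/- For any odd prime p and integer m ≥ 5, each of p^m − 1 and p^m + 1 has at least two distinct prime divisors. -/
open Finset

/-- Any odd `d > 1` dividing `n` yields an odd prime divisor of `n`. -/
lemma aux_exists_odd_prime (n d : ℕ) (hd : d ∣ n) (ho : Odd d) (h1 : 1 < d) :
    ∃ q, q.Prime ∧ Odd q ∧ q ∣ n := by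
  refine ⟨d.minFac, Nat.minFac_prime (by omega), ?_, (Nat.minFac_dvd d).trans hd⟩
  rcases (Nat.minFac_prime (show d ≠ 1 by omega)).eq_two_or_odd' with h | h
  · exfalso
    have := Nat.minFac_dvd d
    rw [h] at this
    rw [Nat.odd_iff] at ho
    omega
  · exact h

/-- Any `d ≡ 2 [MOD 4]` with `d > 2` dividing `n` yields an odd prime divisor of `n`. -/
lemma aux_two_mod_four (n d : ℕ) (hd : d ∣ n) (h4 : d % 4 = 2) (h2 : 2 < d) :
    ∃ q, q.Prime ∧ Odd q ∧ q ∣ n := by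
  refine aux_exists_odd_prime n (d / 2) (dvd_trans ⟨2, by omega⟩ hd) ?_ (by omega)
  rw [Nat.odd_iff]; omega

/-- If an even `n > 2` has an odd prime divisor, it has at least two prime factors. -/
lemma aux_card (n : ℕ) (hn : 2 < n) (h2 : 2 ∣ n)
    (hq : ∃ q, q.Prime ∧ Odd q ∧ q ∣ n) : 2 ≤ n.primeFactors.card := by
  obtain ⟨q, hqp, hqo, hqd⟩ := hq
  have h2m : 2 ∈ n.primeFactors := Nat.mem_primeFactors.mpr ⟨Nat.prime_two, h2, by omega⟩
  have hqm : q ∈ n.primeFactors := Nat.mem_primeFactors.mpr ⟨hqp, hqd, by omega⟩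
  have hne : (2 : ℕ) ≠ q := by rw [Nat.odd_iff] at hqo; omega
  calc 2 = ({2, q} : Finset ℕ).card := (Finset.card_pair hne).symm
    _ ≤ _ := Finset.card_le_card (by
        intro x hx
        simp only [Finset.mem_insert, Finset.mem_singleton] at hx
        rcases hx with rfl | rfl <;> assumption)

/-- The square of an odd number is `1` mod `4`. -/
lemma aux_odd_sq (a : ℕ) (ha : Odd a) : a * a % 4 = 1 := by
  obtain ⟨k, rfl⟩ := ha
  have h : (2 * k + 1) * (2 * k + 1) = 4 * (k * k + k) + 1 := by ring
  omega

/-- For odd `m ≥ 2` and `y = ±1`, `p^m - y^m` has an odd prime divisor (via the odd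
geometric-sum factor). -/
lemma aux_odd_m (p m : ℕ) (hp3 : 3 ≤ p) (hpo : Odd p) (hm1 : 2 ≤ m) (hmo : Odd m)
    (y : ℤ) (hy : y = 1 ∨ y = -1) :
    ∃ q : ℕ, q.Prime ∧ Odd q ∧ (q : ℤ) ∣ ((p : ℤ) ^ m - y ^ m) := by
  set Q : ℤ := ∑ i ∈ Finset.range m, (p : ℤ) ^ i * y ^ (m - 1 - i) with hQ
  have hmul : Q * ((p : ℤ) - y) = (p : ℤ) ^ m - y ^ m := geom_sum₂_mul (p : ℤ) y m
  -- Q is odd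
  have hp2 : ((p : ℕ) : ZMod 2) = 1 := by
    conv_lhs => rw [show p = 2 * (p / 2) + 1 by rw [Nat.odd_iff] at hpo; omega]
    push_cast
    rw [show (2 : ZMod 2) = 0 by decide]
    ring
  have hm2 : ((m : ℕ) : ZMod 2) = 1 := by
    conv_lhs => rw [show m = 2 * (m / 2) + 1 by rw [Nat.odd_iff] at hmo; omega]
    push_cast
    rw [show (2 : ZMod 2) = 0 by decide]
    ring
  have hQcast : ((Q : ℤ) : ZMod 2) = 1 := by
    have hy2 : ((y : ℤ) : ZMod 2) = 1 := by rcases hy with rfl | rfl <;> decide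
    rw [hQ]
    push_cast
    rw [Finset.sum_congr rfl (fun i _ => by
      rw [show ((p : ℕ) : ZMod 2) = 1 from hp2, hy2, one_pow, one_pow, one_mul])]
    simp only [Finset.sum_const, Finset.card_range, nsmul_eq_mul, mul_one]
    exact hm2
  have hQodd : Odd Q := by
    rw [Int.not_even_iff_odd.symm, even_iff_two_dvd]
    intro h
    have := (ZMod.intCast_zmod_eq_zero_iff_dvd Q 2).mpr (by exact_mod_cast h)
    rw [hQcast] at this
    exact one_ne_zero this
  have habs : Q.natAbs * ((p : ℤ) - y).natAbs = ((p : ℤ) ^ m - y ^ m).natAbs := by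
    rw [← Int.natAbs_mul, hmul]
  have hpm1 : 1 ≤ p ^ m := Nat.one_le_pow _ _ (by omega)
  have hval : p ^ m - 1 ≤ ((p : ℤ) ^ m - y ^ m).natAbs := by
    rcases hy with rfl | rfl
    · rw [one_pow, show (p : ℤ) ^ m - 1 = ((p ^ m - 1 : ℕ) : ℤ) by push_cast [hpm1]; ring,
        Int.natAbs_natCast]
    · rw [hmo.neg_one_pow, sub_neg_eq_add,
        show (p : ℤ) ^ m + 1 = ((p ^ m + 1 : ℕ) : ℤ) by push_cast; ring, Int.natAbs_natCast]
      omega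
  have hdy : ((p : ℤ) - y).natAbs ≤ p + 1 := by
    rcases hy with rfl | rfl
    · rw [show (p : ℤ) - 1 = ((p - 1 : ℕ) : ℤ) by push_cast [show 1 ≤ p by omega]; ring,
        Int.natAbs_natCast]
      omega
    · rw [sub_neg_eq_add, show (p : ℤ) + 1 = ((p + 1 : ℕ) : ℤ) by push_cast; ring,
        Int.natAbs_natCast]
  have hpm : p ^ 2 ≤ p ^ m := Nat.pow_le_pow_right (by omega) hm1
  have hQ1 : 1 < Q.natAbs := by
    rcases Nat.lt_or_ge Q.natAbs 2 with h | h
    · exfalso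
      have hle : ((p : ℤ) ^ m - y ^ m).natAbs ≤ p + 1 := by
        calc ((p : ℤ) ^ m - y ^ m).natAbs = Q.natAbs * ((p : ℤ) - y).natAbs := habs.symm
          _ ≤ 1 * (p + 1) := Nat.mul_le_mul (by omega) hdy
          _ = p + 1 := one_mul _
      have h1 : p ^ m ≤ p + 2 := by omega
      have h2 : 3 * p ≤ p * p := Nat.mul_le_mul_right p hp3
      have h3 : p ^ 2 = p * p := sq p
      linarith
    · omega
  refine ⟨Q.natAbs.minFac, Nat.minFac_prime (by omega), ?_, ?_⟩
  · rcases (Nat.minFac_prime (show Q.natAbs ≠ 1 by omega)).eq_two_or_odd' with h | h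
    · exfalso
      have h2 : 2 ∣ Q.natAbs := h ▸ Nat.minFac_dvd _
      have := Int.natAbs_odd.mpr hQodd
      rw [Nat.odd_iff] at this
      omega
    · exact h
  · exact dvd_trans (Int.natCast_dvd.mpr (Nat.minFac_dvd _)) ⟨(p : ℤ) - y, hmul.symm⟩

/-- For any odd prime `p` and integer `m ≥ 5`, each of `p^m − 1` and `p^m + 1` has at
least two distinct prime divisors. -/
theorem two_prime_divisors_of_pm (p m : ℕ) (hp : p.Prime) (hodd : Odd p) (hm : 5 ≤ m) :
    2 ≤ (p ^ m - 1).primeFactors.card ∧ 2 ≤ (p ^ m + 1).primeFactors.card := by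
  have hp3 : 3 ≤ p := by
    have h1 := hp.two_le
    have h2 := Nat.odd_iff.mp hodd
    omega
  have hbig : 243 ≤ p ^ m :=
    le_trans (le_trans (by norm_num : (243 : ℕ) ≤ 3 ^ 5) (Nat.pow_le_pow_right (by omega) hm))
      (Nat.pow_le_pow_left hp3 m)
  have hpmodd : Odd (p ^ m) := hodd.pow
  have hpm2 : p ^ m % 2 = 1 := Nat.odd_iff.mp hpmodd
  constructor
  · -- p ^ m - 1
    refine aux_card _ (by omega) (by omega) ?_
    rcases Nat.even_or_odd m with he | ho
    · -- m even : m = t + t, t ≥ 3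
      obtain ⟨t, ht⟩ := he
      have ht3 : 3 ≤ t := by omega
      have hptodd : Odd (p ^ t) := hodd.pow
      have hpt2 : p ^ t % 2 = 1 := Nat.odd_iff.mp hptodd
      have hpt : 27 ≤ p ^ t :=
        le_trans (le_trans (by norm_num : (27 : ℕ) ≤ 3 ^ 3) (Nat.pow_le_pow_right (by omega) ht3))
          (Nat.pow_le_pow_left hp3 t)
      have hsq : p ^ m = p ^ t * p ^ t := by rw [ht, pow_add]
      obtain ⟨b, hb⟩ : ∃ b, p ^ t = b + 1 := ⟨p ^ t - 1, by omega⟩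
      have hfac : (p ^ t - 1) * (p ^ t + 1) = p ^ m - 1 := by
        rw [hsq, hb, Nat.add_sub_cancel, show (b + 1) * (b + 1) = b * (b + 2) + 1 by ring,
          Nat.add_sub_cancel]
      rcases (show p ^ t % 4 = 1 ∨ p ^ t % 4 = 3 by omega) with h4 | h4
      · exact aux_two_mod_four _ (p ^ t + 1)
          ⟨p ^ t - 1, by rw [← hfac]; ring⟩ (by omega) (by omega)
      · exact aux_two_mod_four _ (p ^ t - 1)
          ⟨p ^ t + 1, by rw [← hfac]⟩ (by omega) (by omega)
    · -- m odd
      obtain ⟨q, hqp, hqo, hqd⟩ := aux_odd_m p m hp3 hodd (by omega) ho 1 (Or.inl rfl)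
      refine ⟨q, hqp, hqo, ?_⟩
      rw [one_pow, show (p : ℤ) ^ m - 1 = ((p ^ m - 1 : ℕ) : ℤ) by
        push_cast [show 1 ≤ p ^ m by omega]; ring] at hqd
      exact_mod_cast hqd
  · -- p ^ m + 1
    refine aux_card _ (by omega) (by omega) ?_
    rcases Nat.even_or_odd m with he | ho
    · -- m even : p ^ m + 1 ≡ 2 (mod 4)
      obtain ⟨t, ht⟩ := he
      have hptodd : Odd (p ^ t) := hodd.pow
      have hsq : p ^ m = p ^ t * p ^ t := by rw [ht, pow_add]
      have h4 : p ^ m % 4 = 1 := by rw [hsq]; exact aux_odd_sq _ hptodd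
      exact aux_two_mod_four _ (p ^ m + 1) dvd_rfl (by omega) (by omega)
    · -- m odd
      obtain ⟨q, hqp, hqo, hqd⟩ := aux_odd_m p m hp3 hodd (by omega) ho (-1) (Or.inr rfl)
      refine ⟨q, hqp, hqo, ?_⟩
      rw [ho.neg_one_pow, sub_neg_eq_add,
        show (p : ℤ) ^ m + 1 = ((p ^ m + 1 : ℕ) : ℤ) by push_cast; ring] at hqd
      exact_mod_cast hqd
end
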